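/- arXiv:2405.03100 — 7 statements merged into one kernel-verified Lean document; each statement's English description precedes it below -/
import Mathlib

section
/- (Lemma, N-qubit k-setting protocol — sufficiency.) Let N > M ≥ 1, n = 2^(N−M), O = Fin (2^M), and k ≥ 1. Let ρ_B be a density matrix on ℂ^n and ρ̃ : Fin k → O → Matrix n n ℂ a family such that: (i) each ρ̃ ℓ a is an unnormalized pure state; (ii) ∑_{a∈O} ρ̃ ℓ a = ρ_B for every setting ℓ; (iii) within each setting the nonzero conditional states are pairwise non-proportional, i.e. if a ≠ a', ρ̃ ℓ a ≠ 0 and ρ̃ ℓ a' ≠ 0, then ρ̃ ℓ a is not a positive real multiple of ρ̃ ℓ a'. If ρ̃ admits an LHS model, then all k settings produce the same results: for all settings ℓ, ℓ', the set {ρ̃ ℓ a | a ∈ O, ρ̃ ℓ a ≠ 0} equals the set {ρ̃ ℓ' a | a ∈ O, ρ̃ ℓ' a ≠ 0}. Equivalently, if at least one setting yields a set of nonzero conditional states different from another's, no LHS model exists (the EPR steering paradox 'k_Q = (1+δ_k)_C' with 0 ≤ δ_k < k−1). -/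
open Matrix BigOperators
open scoped ComplexOrder

noncomputable section

/-- A density matrix: positive semidefinite with trace 1. -/
def IsDensityMatrix {n : ℕ} (A : Matrix (Fin n) (Fin n) ℂ) : Prop :=
  A.PosSemidef ∧ A.trace = 1

/-- An unnormalized pure state: a nonnegative real multiple of a rank-one
projection `v vᴴ` onto a unit vector `v`. -/
def IsUnnormalizedPure {n : ℕ} (A : Matrix (Fin n) (Fin n) ℂ) : Prop :=
  ∃ (c : ℝ) (v : Fin n → ℂ), 0 ≤ c ∧ star v ⬝ᵥ v = 1 ∧ A = c • vecMulVec v (star v)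

/-- `A` is a positive real multiple of `B`. -/
def IsPosMultiple {n : ℕ} (A B : Matrix (Fin n) (Fin n) ℂ) : Prop :=
  ∃ c : ℝ, 0 < c ∧ A = c • B

/-- A local-hidden-state (LHS) model for a family of unnormalized conditional
states `ρt ℓ a` (setting `ℓ`, outcome `a`). -/
def HasLHSModel {n k : ℕ} {O : Type*} [Fintype O]
    (ρt : Fin k → O → Matrix (Fin n) (Fin n) ℂ) : Prop :=
  ∃ (m : ℕ) (w : Fin m → ℝ) (ρ : Fin m → Matrix (Fin n) (Fin n) ℂ)
    (p : O → Fin k → Fin m → ℝ),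
    (∀ ξ, 0 ≤ w ξ) ∧ ((∑ ξ, w ξ) = 1) ∧
    (∀ ξ, IsDensityMatrix (ρ ξ)) ∧
    (∀ a ℓ ξ, 0 ≤ p a ℓ ξ) ∧
    (∀ ℓ ξ, (∑ a, p a ℓ ξ) = 1) ∧
    (∀ ℓ a, ρt ℓ a = ∑ ξ, p a ℓ ξ • w ξ • ρ ξ)

variable {n : ℕ}

lemma psd_add {A B : Matrix (Fin n) (Fin n) ℂ} (hA : A.PosSemidef) (hB : B.PosSemidef) :
    (A + B).PosSemidef := by
  refine .of_dotProduct_mulVec_nonneg (hA.1.add hB.1) fun x => ?_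
  rw [add_mulVec, dotProduct_add]
  exact add_nonneg (hA.dotProduct_mulVec_nonneg x) (hB.dotProduct_mulVec_nonneg x)

lemma psd_sum {m : ℕ} (f : Fin m → Matrix (Fin n) (Fin n) ℂ) (s : Finset (Fin m))
    (h : ∀ i ∈ s, (f i).PosSemidef) : (∑ i ∈ s, f i).PosSemidef := by
  classical
  induction s using Finset.induction_on with
  | empty => simpa using Matrix.PosSemidef.zero
  | insert _ _ hi ih =>
    rw [Finset.sum_insert hi]
    exact psd_add (h _ (Finset.mem_insert_self _ _))
      (ih fun i hi' => h i (Finset.mem_insert_of_mem hi'))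

lemma real_smul_eq (r : ℝ) (M : Matrix (Fin n) (Fin n) ℂ) : r • M = (r : ℂ) • M := by
  ext i j
  simp [Matrix.smul_apply, Complex.real_smul]

lemma psd_real_smul {r : ℝ} (hr : 0 ≤ r) {M : Matrix (Fin n) (Fin n) ℂ}
    (hM : M.PosSemidef) : (r • M).PosSemidef := by
  rw [real_smul_eq]
  refine .of_dotProduct_mulVec_nonneg ?_ ?_
  · unfold Matrix.IsHermitian
    rw [conjTranspose_smul, hM.1]
    congr 1
    simp [Complex.ext_iff]
  · intro x
    rw [smul_mulVec, dotProduct_smul]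
    have := hM.dotProduct_mulVec_nonneg x
    have hr' : (0:ℂ) ≤ (r:ℂ) := by
      rw [Complex.le_def]; simp [hr]
    calc (0:ℂ) = (r:ℂ) * 0 := by ring
    _ ≤ (r:ℂ) * (star x ⬝ᵥ M *ᵥ x) := by
        exact mul_le_mul_of_nonneg_left this hr'
    _ = (r:ℂ) • (star x ⬝ᵥ M *ᵥ x) := by simp [smul_eq_mul]

lemma vvP_mulVec (v : Fin n → ℂ) (x : Fin n → ℂ) :
    vecMulVec v (star v) *ᵥ x = (star v ⬝ᵥ x) • v := by
  ext i
  simp only [vecMulVec_apply, mulVec, dotProduct, Pi.smul_apply, smul_eq_mul,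
    Pi.star_apply, Finset.mul_sum, Finset.sum_mul]
  exact Finset.sum_congr rfl fun j _ => by ring

lemma key (c₀ : ℝ) (v : Fin n → ℂ) (hv : star v ⬝ᵥ v = 1)
    {A B : Matrix (Fin n) (Fin n) ℂ} (hA : A.PosSemidef) (hB : B.PosSemidef)
    (h : A + B = c₀ • vecMulVec v (star v)) :
    ∃ t : ℝ, 0 ≤ t ∧ A = t • vecMulVec v (star v) := by
  -- step 1
  have step1 : ∀ x : Fin n → ℂ, star v ⬝ᵥ x = 0 → A *ᵥ x = 0 := by
    intro x hx
    have hq : star x ⬝ᵥ (A + B) *ᵥ x = 0 := by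
      rw [h, real_smul_eq, smul_mulVec, vvP_mulVec, hx]
      simp
    rw [add_mulVec, dotProduct_add] at hq
    have h1 := hA.dotProduct_mulVec_nonneg x
    have h2 := hB.dotProduct_mulVec_nonneg x
    have hAx : star x ⬝ᵥ A *ᵥ x = 0 := le_antisymm (by
      have : star x ⬝ᵥ A *ᵥ x = - (star x ⬝ᵥ B *ᵥ x) := by linear_combination hq
      rw [this]; exact neg_nonpos.mpr h2) h1
    exact (hA.dotProduct_mulVec_zero_iff x).mp hAx
  set lc : ℂ := star v ⬝ᵥ A *ᵥ v with hlc
  have hlc0 : 0 ≤ lc := hA.dotProduct_mulVec_nonneg v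
  -- step 3 : A v = lc • v
  have step3 : A *ᵥ v = lc • v := by
    set w : Fin n → ℂ := A *ᵥ v - lc • v with hw
    have hvw : star v ⬝ᵥ w = 0 := by
      rw [hw, dotProduct_sub, dotProduct_smul, hv]
      simp [hlc]
    have hAw : A *ᵥ w = 0 := step1 w hvw
    have hwAv : star w ⬝ᵥ A *ᵥ v = 0 := by
      have : star w ⬝ᵥ A *ᵥ v = (star w ᵥ* A) ⬝ᵥ v := dotProduct_mulVec _ _ _
      rw [this]
      have : star w ᵥ* A = star (A *ᵥ w) := by
        rw [star_mulVec, hA.1]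
      rw [this, hAw]
      simp
    have hwv : star w ⬝ᵥ v = 0 := by
      have := congrArg star hvw
      rwa [star_dotProduct, star_star, star_zero] at this
    have hww : star w ⬝ᵥ w = 0 := by
      rw [hw]
      rw [dotProduct_sub, dotProduct_smul]
      rw [← hw, hwAv, hwv]
      simp
    have : w = 0 := by
      rwa [dotProduct_star_self_eq_zero] at hww
    rw [hw] at this
    linear_combination (norm := module) this
  refine ⟨lc.re, by
    rw [Complex.nonneg_iff] at hlc0; exact hlc0.1, ?_⟩
  have hlcre : (lc.re : ℂ) = lc := by
    rw [Complex.nonneg_iff] at hlc0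
    exact Complex.ext rfl (by simp [← hlc0.2])
  -- step 4
  ext i j
  have hx : star v ⬝ᵥ (Pi.single j 1 - (star v ⬝ᵥ Pi.single j 1) • v) = 0 := by
    rw [dotProduct_sub, dotProduct_smul, hv, smul_eq_mul, mul_one, sub_self]
  have h4 := step1 _ hx
  rw [mulVec_sub, mulVec_smul, step3, sub_eq_zero] at h4
  have h5 := congrFun h4 i
  simp only [mulVec_single, mul_one, Pi.smul_apply, smul_eq_mul, MulOpposite.op_one, one_smul, col_apply] at h5
  rw [h5]
  rw [real_smul_eq]
  simp only [Matrix.smul_apply, vecMulVec_apply, Pi.star_apply, smul_eq_mul, hlcre]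
  have : star v ⬝ᵥ Pi.single j 1 = star (v j) := by
    simp [dotProduct, Pi.single_apply]
  rw [this]
  ring

lemma trace_vvP (v : Fin n → ℂ) (hv : star v ⬝ᵥ v = 1) :
    (vecMulVec v (star v)).trace = 1 := by
  rw [← hv]
  simp only [Matrix.trace, Matrix.diag, vecMulVec_apply, Pi.star_apply, dotProduct]
  exact Finset.sum_congr rfl fun i _ => mul_comm _ _

lemma trace_real_smul (r : ℝ) (M : Matrix (Fin n) (Fin n) ℂ) :
    (r • M).trace = (r : ℂ) * M.trace := by
  rw [Matrix.trace_smul]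
  exact Complex.real_smul

lemma smul_cancel {c : ℝ} (hc : c ≠ 0) {X Y : Matrix (Fin n) (Fin n) ℂ}
    (h : c • X = c • Y) : X = Y := by
  have := congrArg (fun Z => c⁻¹ • Z) h
  simpa [smul_smul, inv_mul_cancel₀ hc] using this

/-- N-qubit k-setting lemma, sufficiency: if Bob's conditional
states (all unnormalized pure states, summing to his reduced density matrix
`ρB` in every setting, and pairwise non-proportional within each setting when
nonzero) admit an LHS model, then all `k` settings produce the same set of
nonzero conditional states. -/
theorem qubit_lhs_implies_same_results {N M k : ℕ} (hM : 1 ≤ M) (hNM : M < N)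
    (hk : 1 ≤ k)
    (ρB : Matrix (Fin (2 ^ (N - M))) (Fin (2 ^ (N - M))) ℂ)
    (hρB : IsDensityMatrix ρB)
    (ρt : Fin k → Fin (2 ^ M) → Matrix (Fin (2 ^ (N - M))) (Fin (2 ^ (N - M))) ℂ)
    (hpure : ∀ ℓ a, IsUnnormalizedPure (ρt ℓ a))
    (hsum : ∀ ℓ, (∑ a, ρt ℓ a) = ρB)
    (hdist : ∀ ℓ a a', a ≠ a' → ρt ℓ a ≠ 0 → ρt ℓ a' ≠ 0 →
      ¬ IsPosMultiple (ρt ℓ a) (ρt ℓ a'))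
    (hLHS : HasLHSModel ρt) :
    ∀ ℓ ℓ' : Fin k,
      {A | ∃ a, ρt ℓ a ≠ 0 ∧ ρt ℓ a = A} = {A | ∃ a, ρt ℓ' a ≠ 0 ∧ ρt ℓ' a = A} := by
  classical
  obtain ⟨m, w, ρ, p, hw0, hwsum, hρ, hp0, hpsum, hmodel⟩ := hLHS
  have hterm_psd : ∀ (ℓ : Fin k) (a : Fin (2 ^ M)) (ξ : Fin m),
      (p a ℓ ξ • w ξ • ρ ξ).PosSemidef := fun ℓ a ξ =>
    psd_real_smul (hp0 a ℓ ξ) (psd_real_smul (hw0 ξ) (hρ ξ).1)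
  have hρne : ∀ ξ, ρ ξ ≠ 0 := by
    intro ξ h0
    have := (hρ ξ).2
    rw [h0, Matrix.trace_zero] at this
    exact one_ne_zero this.symm
  have hrep : ∀ (ℓ : Fin k) (a : Fin (2 ^ M)) (ξ : Fin m),
      0 < p a ℓ ξ → 0 < w ξ → ∃ c : ℝ, 0 < c ∧ ρt ℓ a = c • ρ ξ := by
    intro ℓ a ξ hp hw
    obtain ⟨c₀, v, hc₀, hv, hAv⟩ := hpure ℓ a
    have hsplit : (p a ℓ ξ • w ξ • ρ ξ) +
        ∑ ξ' ∈ Finset.univ.erase ξ, (p a ℓ ξ' • w ξ' • ρ ξ') =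
        c₀ • vecMulVec v (star v) := by
      rw [Finset.add_sum_erase _ (fun ξ' => p a ℓ ξ' • w ξ' • ρ ξ') (Finset.mem_univ ξ),
        ← hmodel ℓ a, hAv]
    obtain ⟨t, ht0, hteq⟩ := key c₀ v hv (hterm_psd ℓ a ξ)
      (psd_sum _ _ (fun ξ' _ => hterm_psd ℓ a ξ')) hsplit
    have htr : ((p a ℓ ξ * w ξ : ℝ) : ℂ) = (t : ℂ) := by
      have h1 := congrArg Matrix.trace hteq
      rw [trace_real_smul, trace_real_smul, trace_real_smul,
        (hρ ξ).2, trace_vvP v hv] at h1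
      push_cast at h1 ⊢
      linear_combination h1
    have ht : t = p a ℓ ξ * w ξ := by exact_mod_cast htr.symm
    have hpw : (0:ℝ) < p a ℓ ξ * w ξ := mul_pos hp hw
    have hρξ : ρ ξ = vecMulVec v (star v) := by
      apply smul_cancel (ne_of_gt hpw)
      calc (p a ℓ ξ * w ξ) • ρ ξ = p a ℓ ξ • w ξ • ρ ξ := by rw [← smul_smul]
      _ = t • vecMulVec v (star v) := hteq
      _ = (p a ℓ ξ * w ξ) • vecMulVec v (star v) := by rw [ht]
    have htrA : (c₀ : ℂ) = ((∑ ξ', p a ℓ ξ' * w ξ' : ℝ) : ℂ) := by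
      have h1 := congrArg Matrix.trace hAv
      rw [hmodel ℓ a, Matrix.trace_sum, trace_real_smul, trace_vvP v hv,
        mul_one] at h1
      push_cast
      rw [← h1]
      exact Finset.sum_congr rfl fun ξ' _ => by
        rw [trace_real_smul, trace_real_smul, (hρ ξ').2]
        push_cast; ring
    have hc₀' : c₀ = ∑ ξ', p a ℓ ξ' * w ξ' := by exact_mod_cast htrA
    have hc₀pos : 0 < c₀ := by
      rw [hc₀']
      calc (0:ℝ) < p a ℓ ξ * w ξ := hpw
      _ ≤ ∑ ξ', p a ℓ ξ' * w ξ' :=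
        Finset.single_le_sum (fun ξ' _ => mul_nonneg (hp0 a ℓ ξ') (hw0 ξ'))
          (Finset.mem_univ ξ)
    exact ⟨c₀, hc₀pos, by rw [hAv, hρξ]⟩
  have hne_of_rep : ∀ (ℓ : Fin k) (a : Fin (2 ^ M)) (c : ℝ) (ξ : Fin m),
      0 < c → ρt ℓ a = c • ρ ξ → ρt ℓ a ≠ 0 := by
    intro ℓ a c ξ hc he h0
    rw [h0] at he
    have : ρ ξ = 0 := by
      have := congrArg (fun Z => c⁻¹ • Z) he.symm
      simpa [smul_smul, inv_mul_cancel₀ (ne_of_gt hc)] using this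
    exact hρne ξ this
  have huniq : ∀ (ℓ : Fin k) (ξ : Fin m), 0 < w ξ → ∀ a a',
      0 < p a ℓ ξ → 0 < p a' ℓ ξ → a = a' := by
    intro ℓ ξ hw a a' ha ha'
    by_contra hne
    obtain ⟨c, hc, he⟩ := hrep ℓ a ξ ha hw
    obtain ⟨c', hc', he'⟩ := hrep ℓ a' ξ ha' hw
    refine hdist ℓ a a' hne (hne_of_rep ℓ a c ξ hc he)
      (hne_of_rep ℓ a' c' ξ hc' he') ⟨c * c'⁻¹, by positivity, ?_⟩
    have hρeq : ρ ξ = c'⁻¹ • ρt ℓ a' := by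
      have := congrArg (fun Z => c'⁻¹ • Z) he'.symm
      simpa [smul_smul, inv_mul_cancel₀ (ne_of_gt hc')] using this
    rw [he, hρeq, smul_smul]
  have hex : ∀ (ℓ : Fin k) (ξ : Fin m), ∃ a, 0 < p a ℓ ξ := by
    intro ℓ ξ
    by_contra h
    push_neg at h
    have : (∑ a, p a ℓ ξ) ≤ 0 := Finset.sum_nonpos fun a _ => h a
    rw [hpsum ℓ ξ] at this
    linarith
  have hsame : ∀ (ℓ : Fin k) (ξ ξ' : Fin m), 0 < w ξ → 0 < w ξ' → ρ ξ = ρ ξ' →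
      ∀ a a', 0 < p a ℓ ξ → 0 < p a' ℓ ξ' → a = a' := by
    intro ℓ ξ ξ' hw hw' hρeq a a' ha ha'
    by_contra hne
    obtain ⟨c, hc, he⟩ := hrep ℓ a ξ ha hw
    obtain ⟨c', hc', he'⟩ := hrep ℓ a' ξ' ha' hw'
    rw [← hρeq] at he'
    refine hdist ℓ a a' hne (hne_of_rep ℓ a c ξ hc he)
      (hne_of_rep ℓ a' c' ξ hc' he') ⟨c * c'⁻¹, by positivity, ?_⟩
    have hρeq2 : ρ ξ = c'⁻¹ • ρt ℓ a' := by
      have := congrArg (fun Z => c'⁻¹ • Z) he'.symm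
      simpa [smul_smul, inv_mul_cancel₀ (ne_of_gt hc')] using this
    rw [he, hρeq2, smul_smul]
  have hzero : ∀ (ℓ : Fin k) (a : Fin (2 ^ M)) (ξ ξ' : Fin m),
      0 < w ξ → 0 < w ξ' → ρ ξ ≠ ρ ξ' → 0 < p a ℓ ξ → p a ℓ ξ' = 0 := by
    intro ℓ a ξ ξ' hw hw' hρne' ha
    by_contra hpne
    have ha' : 0 < p a ℓ ξ' := lt_of_le_of_ne (hp0 a ℓ ξ') (Ne.symm hpne)
    obtain ⟨c, hc, he⟩ := hrep ℓ a ξ ha hw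
    obtain ⟨c', hc', he'⟩ := hrep ℓ a ξ' ha' hw'
    have htr : (c : ℂ) = (c' : ℂ) := by
      have h1 := congrArg Matrix.trace he
      have h2 := congrArg Matrix.trace he'
      rw [trace_real_smul, (hρ ξ).2, mul_one] at h1
      rw [trace_real_smul, (hρ ξ').2, mul_one] at h2
      rw [← h1, ← h2]
    have hcc : c = c' := by exact_mod_cast htr
    apply hρne'
    apply smul_cancel (ne_of_gt hc)
    rw [← he, hcc, ← he']
  have hval : ∀ (ℓ : Fin k) (a : Fin (2 ^ M)) (ξ0 : Fin m), 0 < w ξ0 → 0 < p a ℓ ξ0 →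
      ρt ℓ a = (∑ ξ ∈ Finset.univ.filter (fun ξ => 0 < w ξ ∧ ρ ξ = ρ ξ0), w ξ) • ρ ξ0 := by
    intro ℓ a ξ0 hw hp
    have hterm : ∀ ξ : Fin m, p a ℓ ξ • w ξ • ρ ξ =
        if (0 < w ξ ∧ ρ ξ = ρ ξ0) then w ξ • ρ ξ0 else 0 := by
      intro ξ
      by_cases hwξ : 0 < w ξ
      · by_cases hρeq : ρ ξ = ρ ξ0
        · rw [if_pos ⟨hwξ, hρeq⟩]
          obtain ⟨b, hb⟩ := hex ℓ ξ
          have hba : b = a := hsame ℓ ξ ξ0 hwξ hw hρeq b a hb hp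
          have hpa : 0 < p a ℓ ξ := hba ▸ hb
          have hpone : p a ℓ ξ = 1 := by
            have hs : (∑ b', p b' ℓ ξ) = p a ℓ ξ := by
              refine Finset.sum_eq_single a (fun b' _ hb' => ?_)
                (fun hna => absurd (Finset.mem_univ a) hna)
              by_contra hpb
              have hmem : 0 < p b' ℓ ξ := lt_of_le_of_ne (hp0 b' ℓ ξ) (Ne.symm hpb)
              exact hb' (huniq ℓ ξ hwξ b' a hmem hpa)
            rw [← hpsum ℓ ξ, hs]
          rw [hpone, one_smul, hρeq]
        · rw [if_neg (fun hcon => hρeq hcon.2)]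
          have hz : p a ℓ ξ = 0 :=
            hzero ℓ a ξ0 ξ hw hwξ (fun he => hρeq he.symm) hp
          rw [hz, zero_smul]
      · have hwz : w ξ = 0 := le_antisymm (not_lt.mp hwξ) (hw0 ξ)
        rw [if_neg (fun hcon => hwξ hcon.1), hwz, zero_smul, smul_zero]
    rw [hmodel ℓ a, Finset.sum_congr rfl (fun ξ _ => hterm ξ),
      ← Finset.sum_filter, Finset.sum_smul]
  have main : ∀ (ℓ ℓ' : Fin k) (A : Matrix (Fin (2 ^ (N - M))) (Fin (2 ^ (N - M))) ℂ),
      (∃ a, ρt ℓ a ≠ 0 ∧ ρt ℓ a = A) → (∃ a, ρt ℓ' a ≠ 0 ∧ ρt ℓ' a = A) := by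
    rintro ℓ ℓ' A ⟨a, hne, rfl⟩
    have hex0 : ∃ ξ0, 0 < p a ℓ ξ0 ∧ 0 < w ξ0 := by
      by_contra h
      push_neg at h
      apply hne
      rw [hmodel ℓ a]
      apply Finset.sum_eq_zero
      intro ξ _
      by_cases hpξ : 0 < p a ℓ ξ
      · have hwz : w ξ = 0 := le_antisymm (h ξ hpξ) (hw0 ξ)
        rw [hwz, zero_smul, smul_zero]
      · have hpz : p a ℓ ξ = 0 := le_antisymm (not_lt.mp hpξ) (hp0 a ℓ ξ)
        rw [hpz, zero_smul]
    obtain ⟨ξ0, hpξ0, hwξ0⟩ := hex0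
    obtain ⟨a', ha'⟩ := hex ℓ' ξ0
    have h1 := hval ℓ a ξ0 hwξ0 hpξ0
    have h2 := hval ℓ' a' ξ0 hwξ0 ha'
    exact ⟨a', by rw [h2, ← h1]; exact hne, by rw [h2, ← h1]⟩
  intro ℓ ℓ'
  ext A
  exact ⟨fun h => main ℓ ℓ' A h, fun h => main ℓ' ℓ A h⟩
end
end

section
/- (Lemma, N-qudit k-setting protocol — sufficiency.) Let d ≥ 2, N > M ≥ 1, n = d^(N−M), O = Fin (d^M), and k ≥ 1. Let ρ_B be a density matrix on ℂ^n and ρ̃ : Fin k → O → Matrix n n ℂ a family such that: (i) each ρ̃ ℓ a is an unnormalized pure state; (ii) ∑_{a∈O} ρ̃ ℓ a = ρ_B for every setting ℓ; (iii) within each setting the nonzero conditional states are pairwise non-proportional (no one is a positive real multiple of another). If ρ̃ admits an LHS model, then for all settings ℓ, ℓ', the set {ρ̃ ℓ a | a ∈ O, ρ̃ ℓ a ≠ 0} equals the set {ρ̃ ℓ' a | a ∈ O, ρ̃ ℓ' a ≠ 0}. Equivalently, if at least one setting yields a set of nonzero conditional states different from another's, no LHS model exists (the steering paradox 'k_Q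 = (1+δ_k)_C' with 0 ≤ δ_k < k−1 for N-qudit states). -/
open Matrix BigOperators
open scoped ComplexOrder

noncomputable section

lemma myReal_smul {n : ℕ} (r : ℝ) (M : Matrix (Fin n) (Fin n) ℂ) :
    r • M = (r : ℂ) • M := by
  ext i j; simp [Matrix.smul_apply, Complex.real_smul]

lemma myPsdSmul {n : ℕ} {M : Matrix (Fin n) (Fin n) ℂ} (hM : M.PosSemidef)
    {r : ℝ} (hr : 0 ≤ r) : (r • M).PosSemidef := by
  rw [myReal_smul]
  refine Matrix.PosSemidef.of_dotProduct_mulVec_nonneg ?_ ?_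
  · unfold Matrix.IsHermitian
    rw [conjTranspose_smul, hM.1.eq]
    congr 1
    simp [Complex.ext_iff]
  · intro x
    rw [smul_mulVec, dotProduct_smul, smul_eq_mul]
    exact mul_nonneg (by exact_mod_cast hr) (hM.dotProduct_mulVec_nonneg x)

lemma myPsdAdd {n : ℕ} {A B : Matrix (Fin n) (Fin n) ℂ}
    (hA : A.PosSemidef) (hB : B.PosSemidef) : (A + B).PosSemidef := by
  refine Matrix.PosSemidef.of_dotProduct_mulVec_nonneg ?_ ?_
  · unfold Matrix.IsHermitian
    rw [conjTranspose_add, hA.1.eq, hB.1.eq]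
  · intro x
    rw [add_mulVec, dotProduct_add]
    exact add_nonneg (hA.dotProduct_mulVec_nonneg x) (hB.dotProduct_mulVec_nonneg x)

lemma myPsdSum {n m : ℕ} (f : Fin m → Matrix (Fin n) (Fin n) ℂ)
    (s : Finset (Fin m)) (hf : ∀ i ∈ s, (f i).PosSemidef) :
    (∑ i ∈ s, f i).PosSemidef := by
  induction s using Finset.induction with
  | empty => simpa using Matrix.PosSemidef.zero
  | insert _ _ h ih =>
    rw [Finset.sum_insert h]
    exact myPsdAdd (hf _ (Finset.mem_insert_self _ _))
      (ih fun i hi => hf i (Finset.mem_insert_of_mem hi))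

lemma myVecMulVec_mulVec {n : ℕ} (v w u : Fin n → ℂ) :
    (vecMulVec v w) *ᵥ u = (w ⬝ᵥ u) • v := by
  funext i
  simp [vecMulVec_apply, mulVec, dotProduct, Finset.mul_sum, mul_assoc, mul_comm, mul_left_comm]

lemma myTrace_vecMulVec {n : ℕ} (v w : Fin n → ℂ) :
    (vecMulVec v w).trace = w ⬝ᵥ v := by
  simp [Matrix.trace, Matrix.diag, vecMulVec_apply, dotProduct, mul_comm]

/-- A PSD matrix dominated by a rank-one matrix is a real multiple of it. -/
lemma myPsdRankOne {n : ℕ} {X Y : Matrix (Fin n) (Fin n) ℂ}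
    (hX : X.PosSemidef) (hY : Y.PosSemidef) {c : ℝ} {v : Fin n → ℂ}
    (hv : star v ⬝ᵥ v = 1) (h : X + Y = c • vecMulVec v (star v)) :
    ∃ t : ℝ, 0 ≤ t ∧ X = t • vecMulVec v (star v) := by
  have h0 : ∀ u : Fin n → ℂ, star v ⬝ᵥ u = 0 → X *ᵥ u = 0 := by
    intro u hu
    have hq : star u ⬝ᵥ X *ᵥ u + star u ⬝ᵥ Y *ᵥ u = 0 := by
      have := congrArg (fun A : Matrix (Fin n) (Fin n) ℂ => star u ⬝ᵥ A *ᵥ u) h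
      simp only [add_mulVec, dotProduct_add] at this
      rw [this]
      rw [smul_mulVec, myVecMulVec_mulVec, hu]
      simp
    have hx0 : star u ⬝ᵥ X *ᵥ u = 0 := by
      have h1 := hX.dotProduct_mulVec_nonneg u
      have h2 := hY.dotProduct_mulVec_nonneg u
      have : star u ⬝ᵥ X *ᵥ u ≤ 0 := by
        have : star u ⬝ᵥ X *ᵥ u = -(star u ⬝ᵥ Y *ᵥ u) := by linear_combination hq
        rw [this]; exact neg_nonpos_of_nonneg h2
      exact le_antisymm this h1
    exact (hX.dotProduct_mulVec_zero_iff u).mp hx0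
  set t : ℂ := star v ⬝ᵥ X *ᵥ v with ht
  set u0 : Fin n → ℂ := X *ᵥ v - t • v with hu0def
  have hvu0 : star v ⬝ᵥ u0 = 0 := by
    simp only [hu0def, dotProduct_sub, dotProduct_smul, smul_eq_mul, hv, mul_one, ht, sub_self]
  have hXu0 : X *ᵥ u0 = 0 := h0 u0 hvu0
  have hu0v : star u0 ⬝ᵥ v = 0 := by
    have := congrArg star hvu0
    rwa [star_dotProduct, star_star, star_zero] at this
  have hu0Xv : star u0 ⬝ᵥ X *ᵥ v = 0 := by
    have hsm : star (X *ᵥ u0) = star u0 ᵥ* X := by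
      rw [star_mulVec, hX.1.eq]
    rw [dotProduct_mulVec, ← hsm, hXu0, star_zero, zero_dotProduct]
  have hu0zero : u0 = 0 := by
    have : star u0 ⬝ᵥ u0 = 0 := by
      simp only [hu0def, dotProduct_sub, dotProduct_smul] at *
      rw [hu0Xv]
      simp only [smul_eq_mul]
      rw [hu0v]
      ring
    exact dotProduct_star_self_eq_zero.mp this
  have hXv : X *ᵥ v = t • v := sub_eq_zero.mp hu0zero
  have ht0 : 0 ≤ t := hX.dotProduct_mulVec_nonneg v
  have htre : (t.re : ℂ) = t := by
    rw [Complex.le_def] at ht0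
    simp only [Complex.zero_re, Complex.zero_im] at ht0
    exact Complex.ext rfl (by simp [ht0.2.symm])
  refine ⟨t.re, by rw [Complex.le_def] at ht0; simpa using ht0.1, ?_⟩
  have hw : ∀ u : Fin n → ℂ, X *ᵥ u = (star v ⬝ᵥ u) • (t • v) := by
    intro u
    have hperp : star v ⬝ᵥ (u - (star v ⬝ᵥ u) • v) = 0 := by
      simp [dotProduct_sub, dotProduct_smul, hv, smul_eq_mul]
    have := h0 _ hperp
    rw [mulVec_sub, mulVec_smul, sub_eq_zero] at this
    rw [this, hXv]
  ext i j
  have := congrFun (hw (Pi.single j 1)) i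
  have hs : X *ᵥ Pi.single j 1 = fun i => X i j := by
    funext i'
    simp [mulVec, dotProduct, Pi.single_apply]
  rw [hs] at this
  simp only [] at this
  rw [show X i j = ((star v ⬝ᵥ Pi.single j 1) • t • v) i from this]
  simp only [Matrix.smul_apply, vecMulVec_apply, dotProduct, Pi.single_apply, Pi.star_apply]
  simp only [mul_ite, mul_one, mul_zero, Finset.sum_ite_eq', Finset.mem_univ, if_true]
  simp only [Pi.smul_apply, smul_eq_mul, Complex.real_smul]
  rw [htre]
  ring
/-- N-qudit k-setting lemma, sufficiency: if Bob's conditional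
states (all unnormalized pure states, summing to his reduced density matrix
`ρB` in every setting, and pairwise non-proportional within each setting when
nonzero) admit an LHS model, then all `k` settings produce the same set of
nonzero conditional states. -/
theorem qudit_lhs_implies_same_results {d N M k : ℕ} (hd : 2 ≤ d)
    (hM : 1 ≤ M) (hNM : M < N) (hk : 1 ≤ k)
    (ρB : Matrix (Fin (d ^ (N - M))) (Fin (d ^ (N - M))) ℂ)
    (hρB : IsDensityMatrix ρB)
    (ρt : Fin k → Fin (d ^ M) → Matrix (Fin (d ^ (N - M))) (Fin (d ^ (N - M))) ℂ)
    (hpure : ∀ ℓ a, IsUnnormalizedPure (ρt ℓ a))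
    (hsum : ∀ ℓ, (∑ a, ρt ℓ a) = ρB)
    (hdist : ∀ ℓ a a', a ≠ a' → ρt ℓ a ≠ 0 → ρt ℓ a' ≠ 0 →
      ¬ IsPosMultiple (ρt ℓ a) (ρt ℓ a'))
    (hLHS : HasLHSModel ρt) :
    ∀ ℓ ℓ' : Fin k,
      {A | ∃ a, ρt ℓ a ≠ 0 ∧ ρt ℓ a = A} = {A | ∃ a, ρt ℓ' a ≠ 0 ∧ ρt ℓ' a = A} := by

  obtain ⟨m, w, ρ, p, hw0, hw1, hρ, hp0, hp1, hmodel⟩ := hLHS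
  have hρtr : ∀ ξ, (ρ ξ).trace = 1 := fun ξ => (hρ ξ).2
  have hρne : ∀ ξ, ρ ξ ≠ 0 := by
    intro ξ h
    have := hρtr ξ
    rw [h, Matrix.trace_zero] at this
    exact one_ne_zero this.symm
  -- Fact A: a hidden state with positive weight/response pins the conditional state
  have factA : ∀ (ℓ : Fin k) (a : Fin (d ^ M)) ξ, 0 < w ξ → 0 < p a ℓ ξ →
      ∃ c : ℝ, 0 < c ∧ ρt ℓ a = c • ρ ξ := by
    intro ℓ a ξ hwξ hpξ
    obtain ⟨c, v, hc, hv, hav⟩ := hpure ℓ a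
    set f : Fin m → Matrix (Fin (d ^ (N - M))) (Fin (d ^ (N - M))) ℂ :=
      fun ξ' => (p a ℓ ξ' * w ξ') • ρ ξ' with hf
    have hmodel' : ρt ℓ a = ∑ ξ', f ξ' := by
      rw [hmodel ℓ a]
      exact Finset.sum_congr rfl fun ξ' _ => by rw [hf, smul_smul]
    have hfpsd : ∀ ξ', (f ξ').PosSemidef := fun ξ' =>
      myPsdSmul (hρ ξ').1 (mul_nonneg (hp0 a ℓ ξ') (hw0 ξ'))
    have hsplit : f ξ + ∑ ξ' ∈ Finset.univ.erase ξ, f ξ' = c • vecMulVec v (star v) := by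
      rw [Finset.add_sum_erase _ _ (Finset.mem_univ ξ), ← hmodel', hav]
    obtain ⟨t, ht0, htX⟩ := myPsdRankOne (hfpsd ξ)
      (myPsdSum _ _ fun i _ => hfpsd i) hv hsplit
    have htrv : (vecMulVec v (star v)).trace = 1 := by
      rw [myTrace_vecMulVec]; exact hv
    have hpw : 0 < p a ℓ ξ * w ξ := mul_pos hpξ hwξ
    have hteq : t = p a ℓ ξ * w ξ := by
      have h1 := congrArg Matrix.trace htX
      rw [hf] at h1
      simp only [] at h1
      rw [myReal_smul, Matrix.trace_smul, hρtr ξ, myReal_smul, Matrix.trace_smul, htrv] at h1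
      simp only [smul_eq_mul, mul_one] at h1
      exact_mod_cast h1.symm
    have hρξ : ρ ξ = vecMulVec v (star v) := by
      have h2 : (p a ℓ ξ * w ξ) • ρ ξ = (p a ℓ ξ * w ξ) • vecMulVec v (star v) := by
        have := htX
        rw [hf] at this
        simp only [] at this
        rw [this, hteq]
      exact smul_right_injective _ (ne_of_gt hpw) h2
    -- c is positive
    have htr1 : (ρt ℓ a).trace = (c : ℂ) := by
      rw [hav, myReal_smul, Matrix.trace_smul, htrv, smul_eq_mul, mul_one]
    have htr2 : (ρt ℓ a).trace = ((∑ ξ', p a ℓ ξ' * w ξ' : ℝ) : ℂ) := by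
      rw [hmodel', Matrix.trace_sum, Complex.ofReal_sum]
      exact Finset.sum_congr rfl fun ξ' _ => by
        rw [hf]
        simp only []
        rw [myReal_smul, Matrix.trace_smul, hρtr ξ', smul_eq_mul, mul_one]
    have hcsum : c = ∑ ξ', p a ℓ ξ' * w ξ' := by
      have := htr1.symm.trans htr2
      exact_mod_cast this
    have hcpos : 0 < c := by
      rw [hcsum]
      exact lt_of_lt_of_le hpw (Finset.single_le_sum
        (fun ξ' _ => mul_nonneg (hp0 a ℓ ξ') (hw0 ξ')) (Finset.mem_univ ξ))
    exact ⟨c, hcpos, by rw [hav, hρξ]⟩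
  -- Fact B: deterministic response
  have factB : ∀ (ℓ : Fin k) (a a' : Fin (d ^ M)) ξ, 0 < w ξ →
      0 < p a ℓ ξ → 0 < p a' ℓ ξ → a = a' := by
    intro ℓ a a' ξ hwξ hpa hpa'
    by_contra hne
    obtain ⟨c, hc, h1⟩ := factA ℓ a ξ hwξ hpa
    obtain ⟨c', hc', h2⟩ := factA ℓ a' ξ hwξ hpa'
    refine hdist ℓ a a' hne ?_ ?_ ⟨c / c', div_pos hc hc', ?_⟩
    · rw [h1]; exact smul_ne_zero (ne_of_gt hc) (hρne ξ)
    · rw [h2]; exact smul_ne_zero (ne_of_gt hc') (hρne ξ)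
    · rw [h1, h2, smul_smul]
      congr 1
      field_simp
  -- Fact C: some response is positive
  have factC : ∀ (ℓ : Fin k) ξ, ∃ a, 0 < p a ℓ ξ := by
    intro ℓ ξ
    by_contra h
    push_neg at h
    have : ∑ a, p a ℓ ξ = 0 :=
      Finset.sum_eq_zero fun a _ => le_antisymm (h a) (hp0 a ℓ ξ)
    rw [hp1 ℓ ξ] at this
    exact one_ne_zero this
  -- Fact D: the positive response equals one
  have factD : ∀ (ℓ : Fin k) (a : Fin (d ^ M)) ξ, 0 < w ξ → 0 < p a ℓ ξ →
      p a ℓ ξ = 1 := by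
    intro ℓ a ξ hwξ hpa
    rw [← hp1 ℓ ξ]
    symm
    refine Finset.sum_eq_single a (fun b _ hb => ?_) (fun h => absurd (Finset.mem_univ a) h)
    by_contra hbne
    have hbpos : 0 < p b ℓ ξ := lt_of_le_of_ne (hp0 b ℓ ξ) (Ne.symm hbne)
    exact hb (factB ℓ b a ξ hwξ hbpos hpa)
  -- Fact F: proportional density matrices are equal
  have factF : ∀ ξ ξ0 (c1 c0 : ℝ), c1 • ρ ξ = c0 • ρ ξ0 → 0 < c1 → ρ ξ = ρ ξ0 := by
    intro ξ ξ0 c1 c0 hAeq hc1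
    have h : ρ ξ = (c1⁻¹ * c0) • ρ ξ0 := by
      rw [mul_smul, ← hAeq, smul_smul, inv_mul_cancel₀ (ne_of_gt hc1), one_smul]
    have htr := congrArg Matrix.trace h
    rw [hρtr, myReal_smul, Matrix.trace_smul, hρtr, smul_eq_mul, mul_one] at htr
    have : (c1⁻¹ * c0 : ℝ) = 1 := by exact_mod_cast htr.symm
    rw [h, this, one_smul]
  -- Fact G: transfer of outcomes through equal hidden states
  have factG : ∀ (ℓ'' : Fin k) ξ ξ0 (a'' b : Fin (d ^ M)), 0 < w ξ0 → 0 < w ξ →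
      ρ ξ = ρ ξ0 → 0 < p b ℓ'' ξ → 0 < p a'' ℓ'' ξ0 → b = a'' := by
    intro ℓ'' ξ ξ0 a'' b hw0' hwz hρeq hb ha''
    obtain ⟨c2, hc2, h2⟩ := factA ℓ'' b ξ hwz hb
    rw [hρeq] at h2
    obtain ⟨c3, hc3, h3⟩ := factA ℓ'' a'' ξ0 hw0' ha''
    by_contra hne
    refine hdist ℓ'' b a'' hne ?_ ?_ ⟨c2 / c3, div_pos hc2 hc3, ?_⟩
    · rw [h2]; exact smul_ne_zero (ne_of_gt hc2) (hρne ξ0)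
    · rw [h3]; exact smul_ne_zero (ne_of_gt hc3) (hρne ξ0)
    · rw [h2, h3, smul_smul]
      congr 1
      field_simp
  -- the key step
  have key : ∀ (ℓ ℓ' : Fin k) (a : Fin (d ^ M)), ρt ℓ a ≠ 0 →
      ∃ a', ρt ℓ' a' ≠ 0 ∧ ρt ℓ' a' = ρt ℓ a := by
    intro ℓ ℓ' a hne
    have hex : ∃ ξ0, p a ℓ ξ0 • w ξ0 • ρ ξ0 ≠ 0 := by
      by_contra h
      push_neg at h
      exact hne (by rw [hmodel ℓ a]; exact Finset.sum_eq_zero fun ξ _ => h ξ)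
    obtain ⟨ξ0, hξ0⟩ := hex
    have hpa0 : 0 < p a ℓ ξ0 :=
      lt_of_le_of_ne (hp0 a ℓ ξ0) fun h => hξ0 (by rw [← h, zero_smul])
    have hw0' : 0 < w ξ0 :=
      lt_of_le_of_ne (hw0 ξ0) fun h => hξ0 (by rw [← h]; simp)
    obtain ⟨a', ha'⟩ := factC ℓ' ξ0
    obtain ⟨c0, hc0, hρta⟩ := factA ℓ a ξ0 hw0' hpa0
    obtain ⟨c3, hc3, hρta'⟩ := factA ℓ' a' ξ0 hw0' ha'
    refine ⟨a', ?_, ?_⟩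
    · rw [hρta']; exact smul_ne_zero (ne_of_gt hc3) (hρne ξ0)
    · rw [hmodel ℓ' a', hmodel ℓ a]
      refine Finset.sum_congr rfl fun ξ _ => ?_
      rcases eq_or_lt_of_le (hw0 ξ) with hwz | hwz
      · rw [← hwz]; simp
      · have hiff : 0 < p a ℓ ξ ↔ 0 < p a' ℓ' ξ := by
          constructor
          · intro hpa
            obtain ⟨c1, hc1, h1⟩ := factA ℓ a ξ hwz hpa
            have hρeq : ρ ξ = ρ ξ0 := factF ξ ξ0 c1 c0 (h1.symm.trans hρta) hc1
            obtain ⟨b, hb⟩ := factC ℓ' ξ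
            have hba : b = a' := factG ℓ' ξ ξ0 a' b hw0' hwz hρeq hb ha'
            rw [← hba]; exact hb
          · intro hpa'
            obtain ⟨c4, hc4, h4⟩ := factA ℓ' a' ξ hwz hpa'
            have hρeq : ρ ξ = ρ ξ0 := factF ξ ξ0 c4 c3 (h4.symm.trans hρta') hc4
            obtain ⟨b, hb⟩ := factC ℓ ξ
            have hba : b = a := factG ℓ ξ ξ0 a b hw0' hwz hρeq hb hpa0
            rw [← hba]; exact hb
        have hpeq : p a' ℓ' ξ = p a ℓ ξ := by
          by_cases hcase : 0 < p a ℓ ξ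
          · rw [factD ℓ' a' ξ hwz (hiff.mp hcase), factD ℓ a ξ hwz hcase]
          · have h1 : p a ℓ ξ = 0 := le_antisymm (not_lt.mp hcase) (hp0 a ℓ ξ)
            have h2 : p a' ℓ' ξ = 0 := by
              by_contra h2
              exact hcase (hiff.mpr (lt_of_le_of_ne (hp0 a' ℓ' ξ) (Ne.symm h2)))
            rw [h1, h2]
        rw [hpeq]
  intro ℓ ℓ'
  ext A
  simp only [Set.mem_setOf_eq]
  constructor
  · rintro ⟨a, h1, h2⟩
    obtain ⟨a', h3, h4⟩ := key ℓ ℓ' a h1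
    exact ⟨a', h3, h4.trans h2⟩
  · rintro ⟨a, h1, h2⟩
    obtain ⟨a', h3, h4⟩ := key ℓ' ℓ a h1
    exact ⟨a', h3, h4.trans h2⟩
end
end

section
/- (Generalized EPR steering paradox theorem, 2-setting protocol.) Let N > M ≥ 1, n = 2^(N−M), O = Fin (2^M), and k = 2 settings. Let ρ_B be a density matrix on ℂ^n and ρ̃ : Fin 2 → O → Matrix n n ℂ a family such that: (i) each ρ̃ ℓ a is an unnormalized pure state; (ii) ∑_{a∈O} ρ̃ ℓ a = ρ_B for ℓ = 0, 1; (iii) within each setting the nonzero conditional states are pairwise non-proportional (no one is a positive real multiple of another). Then ρ̃ admits an LHS model if and only if the two settings produce the same set of nonzero conditional states, i.e. {ρ̃ 0 a | a ∈ O, ρ̃ 0 a ≠ 0} = {ρ̃ 1 a | a ∈ O, ρ̃ 1 a ≠ 0}. In particular, whenever the two sets differ, the EPR steering paradox '2_Q = (1+δ)_C' with 0 ≤ δ < 1 arises. -/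
open Matrix BigOperators
open scoped ComplexOrder

noncomputable section

namespace EPRAux
variable {d : ℕ}

lemma vecMulVec_mulVec' (v x : Fin d → ℂ) :
    (vecMulVec v (star v)) *ᵥ x = (star v ⬝ᵥ x) • v := by
  ext i
  simp only [mulVec, vecMulVec_apply, dotProduct, Pi.smul_apply, smul_eq_mul, Pi.star_apply]
  rw [Finset.sum_mul]
  exact Finset.sum_congr rfl fun j _ => by ring

lemma rankOne_dominance {v : Fin d → ℂ} (hv : star v ⬝ᵥ v = 1)
    {A B : Matrix (Fin d) (Fin d) ℂ} (hA : A.PosSemidef) (hB : B.PosSemidef)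
    (c : ℝ) (hAB : A + B = c • vecMulVec v (star v)) :
    ∃ t : ℝ, 0 ≤ t ∧ A = t • vecMulVec v (star v) := by
  have key : ∀ x : Fin d → ℂ, star v ⬝ᵥ x = 0 → A *ᵥ x = 0 := by
    intro x hx
    have hsum : star x ⬝ᵥ (A + B) *ᵥ x = 0 := by
      rw [hAB, smul_mulVec, dotProduct_smul, vecMulVec_mulVec', hx, zero_smul,
        dotProduct_zero, smul_zero]
    rw [add_mulVec, dotProduct_add] at hsum
    exact (hA.dotProduct_mulVec_zero_iff x).mp
      ((add_eq_zero_iff_of_nonneg (hA.dotProduct_mulVec_nonneg x) (hB.dotProduct_mulVec_nonneg x)).mp hsum).1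
  set u := A *ᵥ v with hu
  have hcol : ∀ i j, A i j = star (v j) * u i := by
    intro i j
    have hx : star v ⬝ᵥ (Pi.single j 1 - star (v j) • v) = 0 := by
      rw [dotProduct_sub, dotProduct_smul]
      simp [dotProduct_single, hv, Pi.star_apply]
    have h := key _ hx
    rw [mulVec_sub, mulVec_smul, sub_eq_zero] at h
    have h3 := congrFun h i
    simpa [mulVec_single, smul_eq_mul, mul_comm] using h3
  have hherm : ∀ i j, star (v j) * u i = v i * star (u j) := by
    intro i j
    have h1 : A i j = star (A j i) := (hA.1.apply i j).symm
    rw [hcol i j, hcol j i] at h1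
    rw [h1, StarMul.star_mul, star_star]; ring
  set t0 := star v ⬝ᵥ u with ht0
  have hvu : ∀ i, u i = v i * star t0 := by
    intro i
    calc u i = u i * (star v ⬝ᵥ v) := by rw [hv, mul_one]
    _ = ∑ j, (star (v j) * u i) * v j := by
        rw [dotProduct, Finset.mul_sum]
        exact Finset.sum_congr rfl fun j _ => by simp [Pi.star_apply]; ring
    _ = ∑ j, (v i * star (u j)) * v j := by
        exact Finset.sum_congr rfl fun j _ => by rw [hherm i j]
    _ = v i * star t0 := by
        rw [ht0, dotProduct, star_sum, Finset.mul_sum]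
        exact Finset.sum_congr rfl fun j _ => by rw [StarMul.star_mul]; simp [Pi.star_apply]; ring
  have ht0nn : 0 ≤ t0 := hA.dotProduct_mulVec_nonneg v
  obtain ⟨hre, him⟩ := Complex.nonneg_iff.mp ht0nn
  refine ⟨t0.re, hre, ?_⟩
  ext i j
  have ht0eq : (t0.re : ℂ) = t0 := by
    exact Complex.ext (Complex.ofReal_re _) (by simp [← him])
  rw [hcol i j, hvu i, Matrix.smul_apply, vecMulVec_apply, Pi.star_apply]
  rw [show star t0 = t0 from by rw [← ht0eq]; simp, ← ht0eq]
  rw [Complex.real_smul, Complex.ofReal_re]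
  ring
lemma vecMulVec_herm (v : Fin d → ℂ) :
    (vecMulVec v (star v)).IsHermitian := by
  ext i j
  simp [conjTranspose_apply, vecMulVec_apply, mul_comm]

lemma vecMulVec_psd (v : Fin d → ℂ) :
    (vecMulVec v (star v)).PosSemidef := by
  refine Matrix.PosSemidef.of_dotProduct_mulVec_nonneg (vecMulVec_herm v) (fun x => ?_)
  rw [vecMulVec_mulVec', dotProduct_smul]
  have h : star x ⬝ᵥ v = star (star v ⬝ᵥ x) := by
    simp [dotProduct, star_sum, mul_comm]
  rw [smul_eq_mul, h, mul_comm]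
  exact star_mul_self_nonneg _

lemma vecMulVec_trace {v : Fin d → ℂ} (hv : star v ⬝ᵥ v = 1) :
    (vecMulVec v (star v)).trace = 1 := by
  rw [← hv]
  simp [trace, diag, vecMulVec_apply, dotProduct, mul_comm]

lemma psd_smul {A : Matrix (Fin d) (Fin d) ℂ} (hA : A.PosSemidef) {r : ℝ} (hr : 0 ≤ r) :
    (r • A).PosSemidef := by
  refine Matrix.PosSemidef.of_dotProduct_mulVec_nonneg ?_ (fun x => ?_)
  · unfold Matrix.IsHermitian
    rw [conjTranspose_smul, hA.1.eq, star_trivial]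
  · rw [smul_mulVec, dotProduct_smul, Complex.real_smul]
    exact mul_nonneg (by exact_mod_cast Complex.zero_le_real.mpr hr) (hA.dotProduct_mulVec_nonneg x)

lemma psd_sum {ι : Type*} (s : Finset ι) (f : ι → Matrix (Fin d) (Fin d) ℂ)
    (h : ∀ i ∈ s, (f i).PosSemidef) : (∑ i ∈ s, f i).PosSemidef := by
  classical
  induction s using Finset.induction with
  | empty => simpa using Matrix.PosSemidef.zero
  | insert a s hni ih =>
    rw [Finset.sum_insert hni]
    exact (h _ (Finset.mem_insert_self _ _)).add
      (ih fun i hi => h i (Finset.mem_insert_of_mem hi))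

lemma trace_real_smul (r : ℝ) (A : Matrix (Fin d) (Fin d) ℂ) :
    (r • A).trace = (r : ℂ) * A.trace := by
  rw [trace_smul, Complex.real_smul]

lemma isPosMultiple_refl (A : Matrix (Fin d) (Fin d) ℂ) : IsPosMultiple A A :=
  ⟨1, one_pos, (one_smul _ _).symm⟩

lemma posMult_symm {A B : Matrix (Fin d) (Fin d) ℂ} (h : IsPosMultiple A B) :
    IsPosMultiple B A := by
  obtain ⟨c, hc, rfl⟩ := h
  exact ⟨c⁻¹, inv_pos.2 hc, by rw [smul_smul, inv_mul_cancel₀ hc.ne', one_smul]⟩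

lemma posMult_trans {A B C : Matrix (Fin d) (Fin d) ℂ} (h1 : IsPosMultiple A B)
    (h2 : IsPosMultiple B C) : IsPosMultiple A C := by
  obtain ⟨c, hc, rfl⟩ := h2
  obtain ⟨c', hc', rfl⟩ := h1
  exact ⟨c' * c, mul_pos hc' hc, (smul_smul _ _ _)⟩

lemma eq_of_posMultiple_trace_one {X Y Z : Matrix (Fin d) (Fin d) ℂ}
    (hX : IsPosMultiple X Z) (hY : IsPosMultiple Y Z)
    (htX : X.trace = 1) (htY : Y.trace = 1) : X = Y := by
  obtain ⟨r, hr, rfl⟩ := hX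
  obtain ⟨s, hs, rfl⟩ := hY
  rw [trace_real_smul] at htX htY
  have hZ : Z.trace ≠ 0 := fun h => by simp [h] at htX
  have h1 : (r : ℂ) = (s : ℂ) := mul_right_cancel₀ hZ (htX.trans htY.symm)
  have : r = s := by exact_mod_cast h1
  rw [this]

lemma sum_dominance {ι : Type*} [Fintype ι] [DecidableEq ι]
    {A : ι → Matrix (Fin d) (Fin d) ℂ}
    (hA : ∀ i, (A i).PosSemidef) {c : ℝ} {v : Fin d → ℂ} (hv : star v ⬝ᵥ v = 1)
    (hsum : ∑ i, A i = c • vecMulVec v (star v)) (i : ι) :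
    ∃ t : ℝ, 0 ≤ t ∧ A i = t • vecMulVec v (star v) := by
  have h := Finset.add_sum_erase Finset.univ A (Finset.mem_univ i)
  exact rankOne_dominance hv (hA i)
    (psd_sum _ _ fun j _ => hA j) c (h.trans hsum)

lemma term_facts {m : ℕ} {w : Fin m → ℝ} {ρ : Fin m → Matrix (Fin d) (Fin d) ℂ}
    (hw : ∀ ξ, 0 ≤ w ξ) (hρ : ∀ ξ, IsDensityMatrix (ρ ξ))
    {q : Fin m → ℝ} (hq : ∀ ξ, 0 ≤ q ξ)
    {X : Matrix (Fin d) (Fin d) ℂ} (hX : IsUnnormalizedPure X)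
    (hXsum : X = ∑ ξ, q ξ • w ξ • ρ ξ)
    {ξ : Fin m} (hne : q ξ • w ξ • ρ ξ ≠ 0) :
    0 < q ξ ∧ 0 < w ξ ∧ X ≠ 0 ∧ IsPosMultiple (ρ ξ) X := by
  obtain ⟨c, v, hc, hv, hXeq⟩ := hX
  have hterm_psd : ∀ η, (q η • w η • ρ η).PosSemidef := fun η =>
    psd_smul (psd_smul (hρ η).1 (hw η)) (hq η)
  have hdom : ∀ η, ∃ t : ℝ, 0 ≤ t ∧ q η • w η • ρ η = t • vecMulVec v (star v) :=
    sum_dominance hterm_psd hv (hXsum.symm.trans hXeq)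
  choose t ht hteq using hdom
  have hqξ : 0 < q ξ := (hq ξ).lt_of_ne fun h => hne (by rw [← h, zero_smul])
  have hwξ : 0 < w ξ := (hw ξ).lt_of_ne fun h => hne (by rw [← h]; simp)
  have htξ : 0 < t ξ := by
    rcases (ht ξ).lt_or_eq with h | h
    · exact h
    · exact absurd (by rw [hteq ξ, ← h, zero_smul]) hne
  -- trace computation: t η = q η * w η
  have htr : ∀ η, (t η : ℂ) = (q η : ℂ) * (w η : ℂ) := by
    intro η
    have h1 : (q η • w η • ρ η).trace = (q η : ℂ) * ((w η : ℂ) * 1) := by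
      rw [trace_real_smul, trace_real_smul, (hρ η).2]
    have h2 : (q η • w η • ρ η).trace = (t η : ℂ) * 1 := by
      rw [hteq η, trace_real_smul, vecMulVec_trace hv]
    rw [h2, mul_one] at h1
    rw [h1, mul_one]
  have htreal : ∀ η, t η = q η * w η := by
    intro η; exact_mod_cast htr η
  -- c = ∑ t
  have hcsum : c = ∑ η, t η := by
    have h1 : X.trace = (c : ℂ) := by rw [hXeq, trace_real_smul, vecMulVec_trace hv, mul_one]
    have h2 : X.trace = ((∑ η, t η : ℝ) : ℂ) := by
      rw [hXsum, trace_sum]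
      push_cast
      exact Finset.sum_congr rfl fun η _ => by
        rw [trace_real_smul, trace_real_smul, (hρ η).2, mul_one]
        exact_mod_cast (htr η).symm
    exact_mod_cast h1.symm.trans h2
  have hcpos : 0 < c := by
    rw [hcsum]
    exact Finset.sum_pos' (fun η _ => ht η) ⟨ξ, Finset.mem_univ ξ, htξ⟩
  have hXne : X ≠ 0 := by
    intro h
    rw [h] at hXeq
    have := congrArg Matrix.trace hXeq
    rw [trace_zero, trace_real_smul, vecMulVec_trace hv, mul_one] at this
    exact hcpos.ne' (by exact_mod_cast this.symm)
  refine ⟨hqξ, hwξ, hXne, ?_⟩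
  -- ρ ξ = ((q ξ * w ξ)⁻¹ * t ξ * c⁻¹) • X
  refine ⟨(q ξ * w ξ)⁻¹ * t ξ * c⁻¹, by positivity, ?_⟩
  have h1 : ρ ξ = (q ξ * w ξ)⁻¹ • (q ξ • w ξ • ρ ξ) := by
    rw [smul_smul, smul_smul]
    rw [show (q ξ * w ξ)⁻¹ * q ξ * w ξ = 1 by field_simp, one_smul]
  rw [h1, hteq ξ, hXeq, smul_smul, smul_smul]
  congr 1
  field_simp
lemma lhs_subset {K : ℕ} {ρt : Fin 2 → Fin K → Matrix (Fin d) (Fin d) ℂ}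
    (hpure : ∀ ℓ a, IsUnnormalizedPure (ρt ℓ a))
    (hdist : ∀ ℓ a a', a ≠ a' → ρt ℓ a ≠ 0 → ρt ℓ a' ≠ 0 →
      ¬ IsPosMultiple (ρt ℓ a) (ρt ℓ a'))
    (h : HasLHSModel ρt) (ℓ ℓ' : Fin 2) :
    {A | ∃ a, ρt ℓ a ≠ 0 ∧ ρt ℓ a = A} ⊆ {A | ∃ a, ρt ℓ' a ≠ 0 ∧ ρt ℓ' a = A} := by
  obtain ⟨m, w, ρ, p, hw0, hw1, hρ, hp0, hp1, heq⟩ := h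
  -- the term of the LHS decomposition
  set T : Fin 2 → Fin K → Fin m → Matrix (Fin d) (Fin d) ℂ :=
    fun L b ξ => p b L ξ • w ξ • ρ ξ with hT
  have heqT : ∀ L b, ρt L b = ∑ ξ, T L b ξ := heq
  have hfact : ∀ L b ξ, T L b ξ ≠ 0 →
      0 < p b L ξ ∧ 0 < w ξ ∧ ρt L b ≠ 0 ∧ IsPosMultiple (ρ ξ) (ρt L b) := by
    intro L b ξ hne
    exact term_facts hw0 hρ (fun η => hp0 b L η) (hpure L b) (heqT L b) hne
  have hρ_ne : ∀ ξ, ρ ξ ≠ 0 := by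
    intro ξ h0
    have := (hρ ξ).2
    rw [h0, trace_zero] at this
    exact zero_ne_one this
  have huniq : ∀ L b b' ξ, T L b ξ ≠ 0 → T L b' ξ ≠ 0 → b = b' := by
    intro L b b' ξ h1 h2
    by_contra hne
    obtain ⟨_, _, hb, hmb⟩ := hfact L b ξ h1
    obtain ⟨_, _, hb', hmb'⟩ := hfact L b' ξ h2
    exact hdist L b b' hne hb hb' (posMult_trans (posMult_symm hmb) hmb')
  have hstep : ∀ (ξ : Fin m) (L : Fin 2), w ξ ≠ 0 → ∃ b, T L b ξ ≠ 0 := by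
    intro ξ L hwξ
    have hsum1 : (∑ b, p b L ξ) ≠ 0 := by rw [hp1 L ξ]; exact one_ne_zero
    obtain ⟨b, _, hb⟩ := Finset.exists_ne_zero_of_sum_ne_zero hsum1
    exact ⟨b, smul_ne_zero hb (smul_ne_zero hwξ (hρ_ne ξ))⟩
  have hfib : ∀ L b ξ ξ', T L b ξ ≠ 0 → T L b ξ' ≠ 0 → ρ ξ = ρ ξ' := by
    intro L b ξ ξ' h1 h2
    exact eq_of_posMultiple_trace_one (hfact L b ξ h1).2.2.2 (hfact L b ξ' h2).2.2.2
      (hρ ξ).2 (hρ ξ').2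
  intro A hA
  obtain ⟨a, ha0, rfl⟩ := hA
  have hex : ∃ ξ₀, T ℓ a ξ₀ ≠ 0 := by
    have : (∑ ξ, T ℓ a ξ) ≠ 0 := (heqT ℓ a) ▸ ha0
    obtain ⟨ξ₀, _, h⟩ := Finset.exists_ne_zero_of_sum_ne_zero this
    exact ⟨ξ₀, h⟩
  obtain ⟨ξ₀, hT0⟩ := hex
  obtain ⟨hpξ₀, hwξ₀, _, hmul₀⟩ := hfact ℓ a ξ₀ hT0
  obtain ⟨a', hT1⟩ := hstep ξ₀ ℓ' hwξ₀.ne'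
  refine ⟨a', (hfact ℓ' a' ξ₀ hT1).2.2.1, ?_⟩
  -- the fibers coincide
  have hFib : ∀ ξ, T ℓ a ξ ≠ 0 ↔ T ℓ' a' ξ ≠ 0 := by
    intro ξ
    constructor
    · intro h1
      have hρeq := hfib ℓ a ξ ξ₀ h1 hT0
      obtain ⟨b, hb⟩ := hstep ξ ℓ' ((hfact ℓ a ξ h1).2.1).ne'
      have hba : b = a' := by
        by_contra hne
        obtain ⟨_, _, hb2, hmb⟩ := hfact ℓ' b ξ hb
        obtain ⟨_, _, hb3, hmb'⟩ := hfact ℓ' a' ξ₀ hT1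
        exact hdist ℓ' b a' hne hb2 hb3 (posMult_trans (posMult_symm hmb) (hρeq ▸ hmb'))
      exact hba ▸ hb
    · intro h1
      have hρeq := hfib ℓ' a' ξ ξ₀ h1 hT1
      obtain ⟨b, hb⟩ := hstep ξ ℓ ((hfact ℓ' a' ξ h1).2.1).ne'
      have hba : b = a := by
        by_contra hne
        obtain ⟨_, _, hb2, hmb⟩ := hfact ℓ b ξ hb
        exact hdist ℓ b a hne hb2 ha0 (posMult_trans (posMult_symm hmb) (hρeq ▸ hmul₀))
      exact hba ▸ hb
  -- p is 1 on each fiber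
  have hPone : ∀ L b ξ, T L b ξ ≠ 0 → p b L ξ = 1 := by
    intro L b ξ h1
    have hz : ∀ b' ∈ Finset.univ, b' ≠ b → p b' L ξ = 0 := by
      intro b' _ hne
      by_contra hpne
      have hTne : T L b' ξ ≠ 0 :=
        smul_ne_zero hpne (smul_ne_zero ((hfact L b ξ h1).2.1).ne' (hρ_ne ξ))
      exact hne (huniq L b' b ξ hTne h1)
    rw [← hp1 L ξ, Finset.sum_eq_single b hz (fun h => absurd (Finset.mem_univ b) h)]
  -- each conditional state is the fiber-weight total times ρ ξ₀
  have hval : ∀ L b, T L b ξ₀ ≠ 0 →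
      ρt L b = (∑ ξ ∈ Finset.univ.filter (fun ξ => T L b ξ ≠ 0), w ξ) • ρ ξ₀ := by
    intro L b h0
    rw [heqT L b, ← Finset.sum_filter_ne_zero Finset.univ]
    rw [Finset.sum_smul]
    refine Finset.sum_congr rfl fun ξ hξ => ?_
    rw [Finset.mem_filter] at hξ
    have h1 : ρ ξ = ρ ξ₀ := hfib L b ξ ξ₀ hξ.2 h0
    show p b L ξ • w ξ • ρ ξ = w ξ • ρ ξ₀
    rw [hPone L b ξ hξ.2, one_smul, h1]
  have e1 := hval ℓ a hT0
  have e2 := hval ℓ' a' hT1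
  rw [e1, e2]
  congr 1
  apply Finset.sum_congr _ (fun _ _ => rfl)
  ext ξ
  simp only [Finset.mem_filter, Finset.mem_univ, true_and]
  exact (hFib ξ).symm
lemma pure_trace_re {A : Matrix (Fin d) (Fin d) ℂ} (h : IsUnnormalizedPure A) :
    A.trace = (A.trace.re : ℂ) ∧ 0 ≤ A.trace.re ∧
      (A ≠ 0 → 0 < A.trace.re ∧ IsDensityMatrix ((A.trace.re)⁻¹ • A)) := by
  obtain ⟨c, v, hc, hv, rfl⟩ := h
  have htr : (c • vecMulVec v (star v)).trace = (c : ℂ) := by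
    rw [trace_real_smul, vecMulVec_trace hv, mul_one]
  have hre : (c • vecMulVec v (star v)).trace.re = c := by rw [htr]; exact Complex.ofReal_re c
  refine ⟨by rw [htr]; simp, by rw [hre]; exact hc, fun hne => ?_⟩
  have hc0 : c ≠ 0 := fun h => hne (by rw [h, zero_smul])
  have hcpos : 0 < c := hc.lt_of_ne (Ne.symm hc0)
  have hmat : (c • vecMulVec v (star v)).trace.re⁻¹ • (c • vecMulVec v (star v))
      = vecMulVec v (star v) := by
    rw [hre, smul_smul, inv_mul_cancel₀ hc0, one_smul]
  refine ⟨by rw [hre]; exact hcpos, ?_, ?_⟩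
  · rw [hmat]; exact vecMulVec_psd v
  · rw [hmat]; exact vecMulVec_trace hv

lemma lhs_of_eq {K : ℕ} {ρB : Matrix (Fin d) (Fin d) ℂ} (hρB : IsDensityMatrix ρB)
    {ρt : Fin 2 → Fin K → Matrix (Fin d) (Fin d) ℂ}
    (hpure : ∀ ℓ a, IsUnnormalizedPure (ρt ℓ a))
    (hsum : ∀ ℓ, (∑ a, ρt ℓ a) = ρB)
    (hdist : ∀ ℓ a a', a ≠ a' → ρt ℓ a ≠ 0 → ρt ℓ a' ≠ 0 →
      ¬ IsPosMultiple (ρt ℓ a) (ρt ℓ a'))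
    (hset : {A | ∃ a, ρt 0 a ≠ 0 ∧ ρt 0 a = A} = {A | ∃ a, ρt 1 a ≠ 0 ∧ ρt 1 a = A}) :
    HasLHSModel ρt := by
  classical
  set tr : Fin K → ℝ := fun a => (ρt 0 a).trace.re with htrdef
  set T : Finset (Fin K) := Finset.univ.filter (fun a => ρt 0 a ≠ 0) with hTdef
  set e : Fin T.card ≃ {x // x ∈ T} := (Fintype.equivFinOfCardEq (Fintype.card_coe T)).symm
    with hedef
  have hmemT : ∀ a, a ∈ T ↔ ρt 0 a ≠ 0 := by
    intro a; rw [hTdef, Finset.mem_filter]; simp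
  have heT : ∀ ξ, ρt 0 (e ξ : Fin K) ≠ 0 := fun ξ => (hmemT _).mp (e ξ).2
  have htrpos : ∀ ξ, 0 < tr (e ξ : Fin K) := fun ξ =>
    ((pure_trace_re (hpure 0 _)).2.2 (heT ξ)).1
  -- distinctness as matrices
  have hne_of_ne : ∀ (L : Fin 2) a a', a ≠ a' → ρt L a ≠ 0 → ρt L a' ≠ 0 →
      ρt L a ≠ ρt L a' := by
    intro L a a' h1 h2 h3 heq
    exact hdist L a a' h1 h2 h3 ⟨1, one_pos, by rw [one_smul]; exact heq⟩
  -- membership transfer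
  have hmemL : ∀ (L : Fin 2) a, ρt L a ≠ 0 → ∃ a₀, ρt 0 a₀ ≠ 0 ∧ ρt 0 a₀ = ρt L a := by
    intro L a h
    fin_cases L
    · exact ⟨a, h, rfl⟩
    · have hm : ρt 1 a ∈ {A | ∃ b, ρt 1 b ≠ 0 ∧ ρt 1 b = A} := ⟨a, h, rfl⟩
      rw [← hset] at hm
      exact hm
  have hmemR : ∀ (L : Fin 2) ξ, ∃ a₀, ρt L a₀ ≠ 0 ∧ ρt L a₀ = ρt 0 (e ξ : Fin K) := by
    intro L ξ
    have hm : ρt 0 (e ξ : Fin K) ∈ {A | ∃ b, ρt 0 b ≠ 0 ∧ ρt 0 b = A} := ⟨_, heT ξ, rfl⟩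
    fin_cases L
    · exact hm
    · rw [hset] at hm; exact hm
  refine ⟨T.card, fun ξ => tr (e ξ : Fin K),
    fun ξ => (tr (e ξ : Fin K))⁻¹ • ρt 0 (e ξ : Fin K),
    fun a L ξ => if ρt L a = ρt 0 (e ξ : Fin K) then 1 else 0,
    fun ξ => (htrpos ξ).le, ?_, ?_, ?_, ?_, ?_⟩
  · -- total weight 1
    have h1 : ∑ ξ, tr (e ξ : Fin K) = ∑ x : {x // x ∈ T}, tr (x : Fin K) :=
      Equiv.sum_comp e (fun x => tr (x : Fin K))
    rw [h1, Finset.sum_coe_sort T (fun a => tr a)]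
    have h2 : ∑ a ∈ T, tr a = ∑ a, tr a := by
      refine Finset.sum_subset (Finset.subset_univ T) ?_
      intro a _ ha
      rw [hmemT] at ha
      push_neg at ha
      rw [htrdef]; simp [ha]
    rw [h2, htrdef]
    have h3 : ∑ a, (ρt 0 a).trace.re = (∑ a, (ρt 0 a).trace).re := by
      rw [Complex.re_sum]
    rw [h3, ← trace_sum, hsum 0, hρB.2]
    simp
  · -- density matrices
    intro ξ
    exact ((pure_trace_re (hpure 0 _)).2.2 (heT ξ)).2
  · -- p nonneg
    intro a L ξ
    dsimp only
    split <;> norm_num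
  · -- responses sum to 1
    intro L ξ
    dsimp only
    obtain ⟨a₀, ha₀ne, ha₀⟩ := hmemR L ξ
    rw [Finset.sum_eq_single a₀]
    · rw [if_pos ha₀]
    · intro b _ hb
      rw [if_neg]
      intro hbe
      exact hne_of_ne L b a₀ hb (hbe ▸ heT ξ) ha₀ne (hbe.trans ha₀.symm)
    · intro h; exact absurd (Finset.mem_univ a₀) h
  · -- reproduces the states
    intro L a
    dsimp only
    have hterm : ∀ ξ, (if ρt L a = ρt 0 (e ξ : Fin K) then (1:ℝ) else 0) •
        tr (e ξ : Fin K) • (tr (e ξ : Fin K))⁻¹ • ρt 0 (e ξ : Fin K)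
        = if ρt L a = ρt 0 (e ξ : Fin K) then ρt 0 (e ξ : Fin K) else 0 := by
      intro ξ
      split
      · rw [one_smul, smul_smul, mul_inv_cancel₀ (htrpos ξ).ne', one_smul]
      · rw [zero_smul]
    rw [Finset.sum_congr rfl (fun ξ _ => hterm ξ)]
    by_cases hLa : ρt L a = 0
    · rw [hLa]
      symm
      refine (Finset.sum_eq_zero ?_)
      intro ξ _
      exact if_neg fun h => heT ξ h.symm
    · obtain ⟨a₀, ha₀ne, ha₀⟩ := hmemL L a hLa
      have ha₀T : a₀ ∈ T := (hmemT a₀).mpr ha₀ne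
      set ξ₀ := e.symm ⟨a₀, ha₀T⟩ with hξ₀
      have hξ₀v : (e ξ₀ : Fin K) = a₀ := by rw [hξ₀, Equiv.apply_symm_apply]
      have hmatch : ρt L a = ρt 0 (e ξ₀ : Fin K) := by rw [hξ₀v, ha₀]
      rw [Finset.sum_eq_single ξ₀]
      · rw [if_pos hmatch, ← hmatch]
      · intro ξ _ hξ
        rw [if_neg]
        intro hcon
        -- then ρt 0 (e ξ) = ρt 0 (e ξ₀), distinct indices
        have hvne : (e ξ : Fin K) ≠ (e ξ₀ : Fin K) := by
          intro hv
          exact hξ (by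
            have : e ξ = e ξ₀ := Subtype.ext hv
            exact e.injective this)
        exact hne_of_ne 0 (e ξ : Fin K) (e ξ₀ : Fin K) hvne (heT ξ) (heT ξ₀)
          (hcon.symm.trans hmatch)
      · intro h; exact absurd (Finset.mem_univ ξ₀) h
end EPRAux

/-- Generalized EPR steering paradox theorem, 2-setting
protocol: Bob's conditional states (unnormalized pure states summing to his
reduced density matrix in each of the two settings, pairwise non-proportional
within each setting when nonzero) admit an LHS model if and only if the two
settings produce the same set of nonzero conditional states. -/
theorem generalized_epr_steering_paradox {N M : ℕ} (hM : 1 ≤ M) (hNM : M < N)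
    (ρB : Matrix (Fin (2 ^ (N - M))) (Fin (2 ^ (N - M))) ℂ)
    (hρB : IsDensityMatrix ρB)
    (ρt : Fin 2 → Fin (2 ^ M) → Matrix (Fin (2 ^ (N - M))) (Fin (2 ^ (N - M))) ℂ)
    (hpure : ∀ ℓ a, IsUnnormalizedPure (ρt ℓ a))
    (hsum : ∀ ℓ, (∑ a, ρt ℓ a) = ρB)
    (hdist : ∀ ℓ a a', a ≠ a' → ρt ℓ a ≠ 0 → ρt ℓ a' ≠ 0 →
      ¬ IsPosMultiple (ρt ℓ a) (ρt ℓ a')) :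
    HasLHSModel ρt ↔
      {A | ∃ a, ρt 0 a ≠ 0 ∧ ρt 0 a = A} = {A | ∃ a, ρt 1 a ≠ 0 ∧ ρt 1 a = A} := by
  constructor
  · intro h
    exact Set.Subset.antisymm (EPRAux.lhs_subset hpure hdist h 0 1)
      (EPRAux.lhs_subset hpure hdist h 1 0)
  · intro h
    exact EPRAux.lhs_of_eq hρB hpure hsum hdist h
end
end

section
/- (Ray-set obstruction, covering the cases with repeated conditional states.) Let n ≥ 1, O a finite outcome set, k ≥ 1, ρ_B a density matrix on ℂ^n, and ρ̃ : Fin k → O → Matrix n n ℂ a family with each ρ̃ ℓ a an unnormalized pure state and ∑_{a∈O} ρ̃ ℓ a = ρ_B for every ℓ. If ρ̃ admits an LHS model, then every setting determines the same set of rays: for all settings ℓ, ℓ' and every a with ρ̃ ℓ a ≠ 0, there exists a' with ρ̃ ℓ' a' ≠ 0 such that ρ̃ ℓ a is a positive real multiple of ρ̃ ℓ' a'. In particular, if some setting has a nonzero conditional state that is not proportional to any conditional state of another setting, then no LHS model exists. -/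
open Matrix BigOperators
open scoped ComplexOrder

noncomputable section

section Helpers

variable {n : ℕ}

lemma real_smul_mat (r : ℝ) (A : Matrix (Fin n) (Fin n) ℂ) :
    r • A = (r : ℂ) • A := by
  ext i j
  simp [Complex.real_smul]

lemma vecMulVec_mulVec' (u w x : Fin n → ℂ) :
    vecMulVec u w *ᵥ x = (w ⬝ᵥ x) • u := by
  funext i
  simp only [vecMulVec_apply, mulVec, dotProduct, Pi.smul_apply, smul_eq_mul, Finset.sum_mul,
    Finset.mul_sum]
  exact Finset.sum_congr rfl (by intros; ring)

lemma trace_vecMulVec' (u w : Fin n → ℂ) :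
    (vecMulVec u w).trace = w ⬝ᵥ u := by
  simp [Matrix.trace, Matrix.diag, vecMulVec_apply, dotProduct, mul_comm]

lemma conjTranspose_vecMulVec (u w : Fin n → ℂ) :
    (vecMulVec u w)ᴴ = vecMulVec (star w) (star u) := by
  ext i j
  simp [vecMulVec_apply, conjTranspose_apply, mul_comm]

lemma smul_vecMulVec (a : ℂ) (u w : Fin n → ℂ) :
    vecMulVec (a • u) w = a • vecMulVec u w := by
  ext i j
  simp [vecMulVec_apply, mul_assoc]

lemma sum_mulVec' {m : ℕ} (s : Finset (Fin m)) (f : Fin m → Matrix (Fin n) (Fin n) ℂ)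
    (x : Fin n → ℂ) : (∑ ξ ∈ s, f ξ) *ᵥ x = ∑ ξ ∈ s, f ξ *ᵥ x := by
  funext i
  simp only [mulVec, dotProduct, Finset.sum_apply, Matrix.sum_apply, Finset.sum_mul]
  exact Finset.sum_comm

lemma posSemidef_real_smul {A : Matrix (Fin n) (Fin n) ℂ} (hA : A.PosSemidef)
    {r : ℝ} (hr : 0 ≤ r) : (r • A).PosSemidef := by
  rw [real_smul_mat]
  apply Matrix.PosSemidef.of_dotProduct_mulVec_nonneg
  · show ((r : ℂ) • A)ᴴ = (r : ℂ) • A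
    rw [conjTranspose_smul, hA.1.eq, Complex.star_def, Complex.conj_ofReal]
  · intro x
    rw [smul_mulVec, dotProduct_smul, smul_eq_mul]
    have hr' : (0:ℂ) ≤ (r:ℂ) := by
      rw [Complex.le_def]; simp [hr]
    exact mul_nonneg hr' (hA.dotProduct_mulVec_nonneg x)

lemma posSemidef_sum' {m : ℕ} (s : Finset (Fin m)) (f : Fin m → Matrix (Fin n) (Fin n) ℂ)
    (hf : ∀ ξ, (f ξ).PosSemidef) : (∑ ξ ∈ s, f ξ).PosSemidef := by
  apply Matrix.PosSemidef.of_dotProduct_mulVec_nonneg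
  · show (∑ ξ ∈ s, f ξ)ᴴ = ∑ ξ ∈ s, f ξ
    rw [conjTranspose_sum]
    exact Finset.sum_congr rfl fun ξ _ => (hf ξ).1
  · intro x
    rw [sum_mulVec']
    have hdp : star x ⬝ᵥ (∑ ξ ∈ s, f ξ *ᵥ x) = ∑ ξ ∈ s, star x ⬝ᵥ f ξ *ᵥ x := by
      simp only [dotProduct, Finset.sum_apply, Finset.mul_sum]
      exact Finset.sum_comm
    rw [hdp]
    exact Finset.sum_nonneg fun ξ _ => (hf ξ).dotProduct_mulVec_nonneg x

/-- Key lemma: a PSD summand of a rank-one matrix is a nonnegative multiple of it. -/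
lemma psd_summand_of_rankOne {M N : Matrix (Fin n) (Fin n) ℂ}
    (hM : M.PosSemidef) (hN : N.PosSemidef) {v : Fin n → ℂ} (hv : star v ⬝ᵥ v = 1)
    {c : ℝ} (h : M + N = c • vecMulVec v (star v)) :
    ∃ t : ℝ, 0 ≤ t ∧ M = t • vecMulVec v (star v) := by
  have hker : ∀ x : Fin n → ℂ, star v ⬝ᵥ x = 0 → M *ᵥ x = 0 := by
    intro x hx
    have h0 : star x ⬝ᵥ (M + N) *ᵥ x = 0 := by
      rw [h, real_smul_mat, smul_mulVec, vecMulVec_mulVec', hx]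
      simp
    rw [add_mulVec, dotProduct_add] at h0
    have hM0 : star x ⬝ᵥ M *ᵥ x = 0 :=
      ((add_eq_zero_iff_of_nonneg (hM.dotProduct_mulVec_nonneg x) (hN.dotProduct_mulVec_nonneg x)).mp h0).1
    exact (hM.dotProduct_mulVec_zero_iff x).mp hM0
  have hMx : ∀ x : Fin n → ℂ, M *ᵥ x = (star v ⬝ᵥ x) • (M *ᵥ v) := by
    intro x
    have hy : star v ⬝ᵥ (x - (star v ⬝ᵥ x) • v) = 0 := by
      rw [dotProduct_sub, dotProduct_smul, hv, smul_eq_mul, mul_one, sub_self]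
    have h1 := hker _ hy
    rw [mulVec_sub, mulVec_smul, sub_eq_zero] at h1
    exact h1
  have hMeq : M = vecMulVec (M *ᵥ v) (star v) := by
    ext i j
    have h2 := congrFun (hMx (Pi.single j 1)) i
    rw [mulVec_single] at h2
    simp only [MulOpposite.op_one, one_smul, Matrix.col_apply] at h2
    rw [vecMulVec_apply, h2, dotProduct_single, mul_one]
    simp [mul_comm]
  set t : ℂ := star v ⬝ᵥ M *ᵥ v with ht
  have htnn : 0 ≤ t := hM.dotProduct_mulVec_nonneg v
  have htre : t = (t.re : ℂ) := by
    rw [Complex.le_def] at htnn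
    simp only [Complex.zero_re, Complex.zero_im] at htnn
    exact Complex.ext_iff.mpr ⟨rfl, htnn.2.symm⟩
  have hherm : vecMulVec (M *ᵥ v) (star v) = vecMulVec v (star (M *ᵥ v)) := by
    have h2 : (vecMulVec (M *ᵥ v) (star v))ᴴ = vecMulVec (M *ᵥ v) (star v) := by
      rw [← hMeq]; exact hM.1
    rw [_root_.conjTranspose_vecMulVec, star_star] at h2
    exact h2.symm
  have hu : M *ᵥ v = t • v := by
    have happ := congrArg (fun A => A *ᵥ v) hherm
    simp only [vecMulVec_mulVec', hv, one_smul] at happ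
    rw [happ]
    have h3 : star (M *ᵥ v) ⬝ᵥ v = star t := by
      rw [star_dotProduct, ht]
    rw [h3, htre]
    simp
  refine ⟨t.re, ?_, ?_⟩
  · rw [Complex.le_def] at htnn
    simpa using htnn.1
  · rw [hMeq, hu, _root_.smul_vecMulVec, real_smul_mat, ← htre]

lemma trace_rankOne_unit {v : Fin n → ℂ} (hv : star v ⬝ᵥ v = 1) :
    (vecMulVec v (star v)).trace = 1 := by
  rw [trace_vecMulVec', hv]

end Helpers

/-- ray-set obstruction: if Bob's conditional states (all
unnormalized pure states summing to `ρB` in every setting) admit an LHS model,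
then every setting determines the same set of rays: any nonzero conditional
state of one setting is a positive real multiple of some nonzero conditional
state of any other setting. -/
theorem lhs_implies_same_rays {n : ℕ} (hn : 1 ≤ n)
    {O : Type*} [Fintype O] {k : ℕ} (hk : 1 ≤ k)
    (ρB : Matrix (Fin n) (Fin n) ℂ) (hρB : IsDensityMatrix ρB)
    (ρt : Fin k → O → Matrix (Fin n) (Fin n) ℂ)
    (hpure : ∀ ℓ a, IsUnnormalizedPure (ρt ℓ a))
    (hsum : ∀ ℓ, (∑ a, ρt ℓ a) = ρB)
    (hLHS : HasLHSModel ρt) :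
    ∀ ℓ ℓ' : Fin k, ∀ a, ρt ℓ a ≠ 0 →
      ∃ a', ρt ℓ' a' ≠ 0 ∧ IsPosMultiple (ρt ℓ a) (ρt ℓ' a') := by
  obtain ⟨m, w, ρ, p, hw, hwsum, hρ, hp, hpsum, hmodel⟩ := hLHS
  intro ℓ ℓ' a ha
  obtain ⟨c, v, hc, hv, hA⟩ := hpure ℓ a
  have hterm_psd : ∀ (b : O) (l : Fin k) (ξ : Fin m),
      (p b l ξ • w ξ • ρ ξ).PosSemidef := by
    intro b l ξ
    rw [smul_smul]
    exact posSemidef_real_smul (hρ ξ).1 (mul_nonneg (hp b l ξ) (hw ξ))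
  have hterm_tr : ∀ (b : O) (l : Fin k) (ξ : Fin m),
      (p b l ξ • w ξ • ρ ξ).trace = (p b l ξ * w ξ : ℝ) := by
    intro b l ξ
    rw [smul_smul, real_smul_mat, trace_smul, (hρ ξ).2, smul_eq_mul, mul_one]
  have htr : ∀ (l : Fin k) (b : O),
      (ρt l b).trace = ((∑ ξ, p b l ξ * w ξ : ℝ) : ℂ) := by
    intro l b
    rw [hmodel l b, trace_sum, Complex.ofReal_sum]
    exact Finset.sum_congr rfl fun ξ _ => hterm_tr b l ξ
  have htrA : (ρt ℓ a).trace = (c : ℂ) := by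
    rw [hA, real_smul_mat, trace_smul, trace_rankOne_unit hv, smul_eq_mul, mul_one]
  have hcpos : 0 < c :=
    lt_of_le_of_ne hc fun h => ha (by rw [hA, ← h, zero_smul])
  have hsum_pos : (0:ℝ) < ∑ ξ, p a ℓ ξ * w ξ := by
    have h1 : ((∑ ξ, p a ℓ ξ * w ξ : ℝ) : ℂ) = (c : ℂ) := by rw [← htr, htrA]
    have h2 := Complex.ofReal_injective h1
    rw [h2]; exact hcpos
  obtain ⟨ξ₀, hξ₀⟩ : ∃ ξ₀, 0 < p a ℓ ξ₀ * w ξ₀ := by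
    obtain ⟨ξ₀, _, hne⟩ := Finset.exists_ne_zero_of_sum_ne_zero (ne_of_gt hsum_pos)
    exact ⟨ξ₀, lt_of_le_of_ne (mul_nonneg (hp a ℓ ξ₀) (hw ξ₀)) (Ne.symm hne)⟩
  have hsplit : (p a ℓ ξ₀ • w ξ₀ • ρ ξ₀) + (∑ ξ ∈ Finset.univ.erase ξ₀, p a ℓ ξ • w ξ • ρ ξ)
      = c • vecMulVec v (star v) := by
    have h1 := Finset.add_sum_erase Finset.univ (fun ξ => p a ℓ ξ • w ξ • ρ ξ)
      (Finset.mem_univ ξ₀)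
    rw [h1, ← hmodel ℓ a, hA]
  have hrest_psd := posSemidef_sum' (Finset.univ.erase ξ₀)
    (fun ξ => p a ℓ ξ • w ξ • ρ ξ) (hterm_psd a ℓ)
  obtain ⟨t, ht, hteq⟩ := psd_summand_of_rankOne (hterm_psd a ℓ ξ₀) hrest_psd hv hsplit
  have ht_tr : ((p a ℓ ξ₀ * w ξ₀ : ℝ) : ℂ) = (t : ℂ) := by
    have h1 := congrArg Matrix.trace hteq
    rw [hterm_tr, real_smul_mat, trace_smul, trace_rankOne_unit hv, smul_eq_mul, mul_one] at h1
    exact h1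
  have ht_eq : t = p a ℓ ξ₀ * w ξ₀ := (Complex.ofReal_injective ht_tr).symm
  have hρξ₀ : ρ ξ₀ = vecMulVec v (star v) := by
    have h1 : (p a ℓ ξ₀ * w ξ₀) • ρ ξ₀ = (p a ℓ ξ₀ * w ξ₀) • vecMulVec v (star v) := by
      rw [← smul_smul, hteq, ht_eq]
    exact smul_right_injective (Matrix (Fin n) (Fin n) ℂ) (ne_of_gt hξ₀) h1
  obtain ⟨a', hpa'⟩ : ∃ a', 0 < p a' ℓ' ξ₀ := by
    have hne : (∑ b, p b ℓ' ξ₀) ≠ 0 := by rw [hpsum ℓ' ξ₀]; norm_num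
    obtain ⟨a', _, hne'⟩ := Finset.exists_ne_zero_of_sum_ne_zero hne
    exact ⟨a', lt_of_le_of_ne (hp a' ℓ' ξ₀) (Ne.symm hne')⟩
  have hwpos : 0 < w ξ₀ :=
    lt_of_le_of_ne (hw ξ₀) fun h => by rw [← h, mul_zero] at hξ₀; exact lt_irrefl 0 hξ₀
  obtain ⟨c', v', hc', hv', hA'⟩ := hpure ℓ' a'
  have hq : 0 < p a' ℓ' ξ₀ * w ξ₀ := mul_pos hpa' hwpos
  have hsum_pos' : (0:ℝ) < ∑ ξ, p a' ℓ' ξ * w ξ :=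
    lt_of_lt_of_le hq (Finset.single_le_sum
      (fun ξ _ => mul_nonneg (hp a' ℓ' ξ) (hw ξ)) (Finset.mem_univ ξ₀))
  have htrA' : (ρt ℓ' a').trace = (c' : ℂ) := by
    rw [hA', real_smul_mat, trace_smul, trace_rankOne_unit hv', smul_eq_mul, mul_one]
  have hc'pos : 0 < c' := by
    have h1 : ((∑ ξ, p a' ℓ' ξ * w ξ : ℝ) : ℂ) = (c' : ℂ) := by rw [← htr, htrA']
    have h2 := Complex.ofReal_injective h1
    rw [← h2]; exact hsum_pos'
  have hsplit' : (p a' ℓ' ξ₀ • w ξ₀ • ρ ξ₀) + (∑ ξ ∈ Finset.univ.erase ξ₀, p a' ℓ' ξ • w ξ • ρ ξ)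
      = c' • vecMulVec v' (star v') := by
    have h1 := Finset.add_sum_erase Finset.univ (fun ξ => p a' ℓ' ξ • w ξ • ρ ξ)
      (Finset.mem_univ ξ₀)
    rw [h1, ← hmodel ℓ' a', hA']
  have hrest_psd' := posSemidef_sum' (Finset.univ.erase ξ₀)
    (fun ξ => p a' ℓ' ξ • w ξ • ρ ξ) (hterm_psd a' ℓ')
  obtain ⟨s, hs, hseq⟩ := psd_summand_of_rankOne (hterm_psd a' ℓ' ξ₀) hrest_psd' hv' hsplit'
  have hs_eq : s = p a' ℓ' ξ₀ * w ξ₀ := by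
    have h1 := congrArg Matrix.trace hseq
    rw [hterm_tr, real_smul_mat, trace_smul, trace_rankOne_unit hv', smul_eq_mul, mul_one] at h1
    exact (Complex.ofReal_injective h1).symm
  have hvv : vecMulVec v (star v) = vecMulVec v' (star v') := by
    have h1 : (p a' ℓ' ξ₀ * w ξ₀) • vecMulVec v (star v)
        = (p a' ℓ' ξ₀ * w ξ₀) • vecMulVec v' (star v') := by
      rw [← hρξ₀, ← smul_smul, hseq, hs_eq]
    exact smul_right_injective (Matrix (Fin n) (Fin n) ℂ) (ne_of_gt hq) h1
  refine ⟨a', ?_, ⟨c / c', div_pos hcpos hc'pos, ?_⟩⟩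
  · intro h0
    rw [h0, Matrix.trace_zero] at htrA'
    exact (ne_of_gt hc'pos) (by exact_mod_cast htrA'.symm)
  · rw [hA, hA', hvv, smul_smul]
    congr 1
    field_simp
end
end

section
/- (Example 1: arbitrary 2-qubit pure entangled state.) For every θ ∈ (0, π/2), the 2-setting, 2-outcome family ρ̃ : Fin 2 → Fin 2 → Matrix 2 2 ℂ given by ρ̃ 0 0 = !![cos²θ, 0; 0, 0], ρ̃ 0 1 = !![0, 0; 0, sin²θ], ρ̃ 1 0 = (1/2) • !![cos²θ, cosθ·sinθ; cosθ·sinθ, sin²θ], ρ̃ 1 1 = (1/2) • !![cos²θ, −cosθ·sinθ; −cosθ·sinθ, sin²θ] admits no LHS model (the EPR steering paradox '2_Q = 1_C'). -/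
open Matrix BigOperators
open scoped ComplexOrder

noncomputable section

open scoped MatrixOrder in
lemma psd_term_nonneg {n : ℕ} {A : Matrix (Fin n) (Fin n) ℂ} (hA : A.PosSemidef)
    (i : Fin n) : 0 ≤ A i i := by
  obtain ⟨B, rfl⟩ := CStarAlgebra.nonneg_iff_eq_star_mul_self.mp hA.nonneg
  rw [Matrix.mul_apply]
  exact Finset.sum_nonneg fun k _ => by
    simpa [Matrix.conjTranspose_apply] using star_mul_self_nonneg (B k i)

open scoped MatrixOrder in
lemma psd_row_col_zero {n : ℕ} {A : Matrix (Fin n) (Fin n) ℂ} (hA : A.PosSemidef)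
    {i : Fin n} (h : A i i = 0) (j : Fin n) : A i j = 0 ∧ A j i = 0 := by
  obtain ⟨B, rfl⟩ := CStarAlgebra.nonneg_iff_eq_star_mul_self.mp hA.nonneg
  have hB : ∀ k, B k i = 0 := by
    rw [Matrix.mul_apply] at h
    have hz := (Finset.sum_eq_zero_iff_of_nonneg (fun k _ => by
      simpa [Matrix.conjTranspose_apply] using star_mul_self_nonneg (B k i))).mp h
    intro k
    have hk := hz k (Finset.mem_univ k)
    simp only [Matrix.star_apply, Matrix.conjTranspose_apply, mul_eq_zero, star_eq_zero, or_self] at hk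
    exact hk
  constructor <;> rw [Matrix.mul_apply] <;>
    exact Finset.sum_eq_zero fun k _ => by simp [Matrix.conjTranspose_apply, hB k]

/-- Example 1, arbitrary 2-qubit pure entangled state: for
`θ ∈ (0, π/2)`, Bob's four unnormalized conditional states for
`|Ψ(θ)⟩ = cos θ|00⟩ + sin θ|11⟩` under the two-setting protocol `{ẑ, x̂}`
admit no LHS model (the paradox "2_Q = 1_C"). -/
theorem example1_two_qubit_pure (θ : ℝ) (hθ : θ ∈ Set.Ioo 0 (Real.pi / 2))
    (ρt : Fin 2 → Fin 2 → Matrix (Fin 2) (Fin 2) ℂ)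
    (h00 : ρt 0 0 = !![((Real.cos θ) ^ 2 : ℂ), 0; 0, 0])
    (h01 : ρt 0 1 = !![0, 0; 0, ((Real.sin θ) ^ 2 : ℂ)])
    (h10 : ρt 1 0 = (1 / 2 : ℝ) •
      !![((Real.cos θ) ^ 2 : ℂ), ((Real.cos θ * Real.sin θ : ℝ) : ℂ);
         ((Real.cos θ * Real.sin θ : ℝ) : ℂ), ((Real.sin θ) ^ 2 : ℂ)])
    (h11 : ρt 1 1 = (1 / 2 : ℝ) •
      !![((Real.cos θ) ^ 2 : ℂ), (-(Real.cos θ * Real.sin θ : ℝ) : ℂ);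
         (-(Real.cos θ * Real.sin θ : ℝ) : ℂ), ((Real.sin θ) ^ 2 : ℂ)]) :
    ¬ HasLHSModel ρt := by
  obtain ⟨hθ0, hθ1⟩ := hθ
  rintro ⟨m, w, ρ, p, hw, hwsum, hρ, hp, hpsum, hmodel⟩
  have hcos : 0 < Real.cos θ := Real.cos_pos_of_mem_Ioo ⟨by linarith [Real.pi_pos], hθ1⟩
  have hsin : 0 < Real.sin θ := Real.sin_pos_of_pos_of_lt_pi hθ0 (by linarith [Real.pi_pos])
  -- entry (1,1) of ρt 0 0 is zero
  have hnn : ∀ (a ℓ : Fin 2) (ξ : Fin m) (i : Fin 2),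
      0 ≤ (p a ℓ ξ • w ξ • ρ ξ) i i := fun a ℓ ξ i => by
    simp only [Matrix.smul_apply, Complex.real_smul]
    exact mul_nonneg (by exact_mod_cast hp a ℓ ξ)
      (mul_nonneg (by exact_mod_cast hw ξ) (psd_term_nonneg (hρ ξ).1 i))
  have e00 : ∀ ξ : Fin m, (p 0 0 ξ • w ξ • ρ ξ) 1 1 = 0 := by
    have h : (∑ ξ, p 0 0 ξ • w ξ • ρ ξ) 1 1 = 0 := by
      rw [← hmodel 0 0, h00]; simp
    rw [Matrix.sum_apply] at h
    exact fun ξ => (Finset.sum_eq_zero_iff_of_nonneg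
      (fun ξ _ => hnn 0 0 ξ 1)).mp h ξ (Finset.mem_univ ξ)
  have e01 : ∀ ξ : Fin m, (p 1 0 ξ • w ξ • ρ ξ) 0 0 = 0 := by
    have h : (∑ ξ, p 1 0 ξ • w ξ • ρ ξ) 0 0 = 0 := by
      rw [← hmodel 0 1, h01]; simp
    rw [Matrix.sum_apply] at h
    exact fun ξ => (Finset.sum_eq_zero_iff_of_nonneg
      (fun ξ _ => hnn 1 0 ξ 0)).mp h ξ (Finset.mem_univ ξ)
  have key : ∀ ξ : Fin m, w ξ ≠ 0 → ρ ξ 0 1 = 0 := by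
    intro ξ hwξ
    have hwξ' : ((w ξ : ℝ) : ℂ) ≠ 0 := by exact_mod_cast hwξ
    by_cases hp0 : p 0 0 ξ = 0
    · have hp1 : p 1 0 ξ = 1 := by
        have := hpsum 0 ξ
        rw [Fin.sum_univ_two] at this
        linarith
      have h := e01 ξ
      simp only [Matrix.smul_apply, Complex.real_smul, hp1, Complex.ofReal_one,
        one_mul, mul_eq_zero, hwξ', false_or] at h
      exact (psd_row_col_zero (hρ ξ).1 h 1).1
    · have hp0' : ((p 0 0 ξ : ℝ) : ℂ) ≠ 0 := by exact_mod_cast hp0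
      have h := e00 ξ
      simp only [Matrix.smul_apply, Complex.real_smul, mul_eq_zero, hp0', hwξ',
        false_or] at h
      exact (psd_row_col_zero (hρ ξ).1 h 0).2
  have hfinal : (ρt 1 0) 0 1 = 0 := by
    rw [hmodel 1 0, Matrix.sum_apply]
    refine Finset.sum_eq_zero fun ξ _ => ?_
    by_cases hwξ : w ξ = 0
    · simp [hwξ]
    · simp [Matrix.smul_apply, key ξ hwξ]
  rw [h10] at hfinal
  simp only [Matrix.smul_apply, Matrix.cons_val', Matrix.cons_val_one, Matrix.head_cons,
    Matrix.empty_val', Matrix.cons_val_fin_one, Matrix.cons_val_zero, Matrix.head_fin_const,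
    Complex.real_smul, mul_eq_zero, Complex.ofReal_eq_zero] at hfinal
  rcases hfinal with h | h
  · norm_num at h
  · simp only [Matrix.cons_val', Matrix.cons_val_zero, Matrix.cons_val_one, Matrix.head_cons,
      Matrix.empty_val', Matrix.cons_val_fin_one, Matrix.of_apply,
      Complex.ofReal_eq_zero] at h
    have : Real.cos θ * Real.sin θ ≠ 0 := by positivity
    exact this h
end
end

section
/- (Example 3: 3-qubit pure entangled state.) The 2-setting, 4-outcome family ρ̃ : Fin 2 → Fin 4 → Matrix 2 2 ℂ given by: setting 0: ρ̃ 0 0 = (1/6) • !![0,0;0,1], ρ̃ 0 1 = (1/6) • !![1,1;1,1], ρ̃ 0 2 = (1/6) • !![1,−1;−1,1], ρ̃ 0 3 = (1/6) • !![1,0;0,0]; setting 1: ρ̃ 1 0 = (1/24) • !![1,1;1,1], ρ̃ 1 1 = (1/24) • !![1,−1;−1,1], ρ̃ 1 2 = (1/24) • !![1,3;3,9], ρ̃ 1 3 = (1/24) • !![9,−3;−3,1]; admits no LHS model (the EPR steering paradox '2_Q = (1+δ)_C' with 0 < δ < 1). -/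
open Matrix BigOperators
open scoped ComplexOrder

noncomputable section

/-- Real quadratic form of a 2×2 matrix at a real vector `(α, β)`. -/
lemma aux_q {M : Matrix (Fin 2) (Fin 2) ℂ} (hM : M.PosSemidef) (α β : ℝ) :
    0 ≤ α^2 * (M 0 0).re + α*β*(M 0 1).re + α*β*(M 1 0).re + β^2 * (M 1 1).re := by
  have h := hM.dotProduct_mulVec_nonneg ![(α:ℂ), (β:ℂ)]
  have hq : star ![(α:ℂ),(β:ℂ)] ⬝ᵥ M.mulVec ![(α:ℂ),(β:ℂ)]
      = (α:ℂ)^2 * M 0 0 + (α:ℂ)*(β:ℂ)*(M 0 1 + M 1 0) + (β:ℂ)^2 * M 1 1 := by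
    simp [dotProduct, Matrix.mulVec, Fin.sum_univ_two, Pi.star_apply, Complex.conj_ofReal]
    ring
  rw [hq] at h
  have h2 := (Complex.le_def.mp h).1
  have h3 : ((α:ℂ)^2 * M 0 0 + (α:ℂ)*(β:ℂ)*(M 0 1 + M 1 0) + (β:ℂ)^2 * M 1 1).re
      = α^2 * (M 0 0).re + α*β*(M 0 1).re + α*β*(M 1 0).re + β^2 * (M 1 1).re := by
    simp [Complex.add_re, Complex.mul_re, ← Complex.ofReal_pow]
    ring
  rw [h3] at h2
  exact h2

lemma entry_re {m : ℕ} (q w : Fin m → ℝ) (ρ : Fin m → Matrix (Fin 2) (Fin 2) ℂ)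
    (T : Matrix (Fin 2) (Fin 2) ℂ) (h : T = ∑ ξ, q ξ • w ξ • ρ ξ) (i j : Fin 2) :
    ∑ ξ, q ξ * w ξ * (ρ ξ i j).re = (T i j).re := by
  have h' : T i j = ∑ ξ, ((q ξ * w ξ : ℝ) : ℂ) * ρ ξ i j := by
    rw [h, Matrix.sum_apply]
    refine Finset.sum_congr rfl fun ξ _ => ?_
    simp [Matrix.smul_apply, smul_smul, Complex.real_smul, mul_assoc]
  have h2 := congrArg Complex.re h'
  rw [Complex.re_sum] at h2
  rw [h2]
  refine Finset.sum_congr rfl fun ξ _ => ?_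
  simp [Complex.mul_re]

lemma sum_lin {m : ℕ} (t A D U V : Fin m → ℝ) (cA cD cU cV SA SD SU SV : ℝ)
    (hA : ∑ ξ, t ξ * A ξ = SA) (hD : ∑ ξ, t ξ * D ξ = SD)
    (hU : ∑ ξ, t ξ * U ξ = SU) (hV : ∑ ξ, t ξ * V ξ = SV) :
    ∑ ξ, t ξ * (cA * A ξ + cU * U ξ + cV * V ξ + cD * D ξ)
      = cA*SA + cU*SU + cV*SV + cD*SD := by
  have h : ∀ ξ ∈ Finset.univ, t ξ * (cA * A ξ + cU * U ξ + cV * V ξ + cD * D ξ)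
      = cA*(t ξ * A ξ) + (cU*(t ξ * U ξ) + (cV*(t ξ * V ξ) + cD*(t ξ * D ξ))) :=
    fun ξ _ => by ring
  rw [Finset.sum_congr rfl h, Finset.sum_add_distrib, Finset.sum_add_distrib,
    Finset.sum_add_distrib, ← Finset.mul_sum, ← Finset.mul_sum, ← Finset.mul_sum,
    ← Finset.mul_sum, hA, hD, hU, hV]
  ring

/-- The model sum equation evaluated on the quadratic form at `(α, β)`. -/
lemma model_q {m : ℕ} (q w : Fin m → ℝ) (ρ : Fin m → Matrix (Fin 2) (Fin 2) ℂ)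
    (T : Matrix (Fin 2) (Fin 2) ℂ) (h : T = ∑ ξ, q ξ • w ξ • ρ ξ) (α β : ℝ) :
    ∑ ξ, q ξ * w ξ * (α^2 * (ρ ξ 0 0).re + α*β*(ρ ξ 0 1).re + α*β*(ρ ξ 1 0).re
        + β^2 * (ρ ξ 1 1).re)
      = α^2 * (T 0 0).re + α*β*(T 0 1).re + α*β*(T 1 0).re + β^2 * (T 1 1).re :=
  sum_lin (fun ξ => q ξ * w ξ) (fun ξ => (ρ ξ 0 0).re) (fun ξ => (ρ ξ 1 1).re)
    (fun ξ => (ρ ξ 0 1).re) (fun ξ => (ρ ξ 1 0).re) (α^2) (β^2) (α*β) (α*β)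
    _ _ _ _
    (entry_re q w ρ T h 0 0) (entry_re q w ρ T h 1 1)
    (entry_re q w ρ T h 0 1) (entry_re q w ρ T h 1 0)

/-- If a PSD 2×2 matrix with trace 1 has vanishing (0,0) entry, its
off-diagonal real parts cancel and the (1,1) entry is 1. -/
lemma aux_offdiag {M : Matrix (Fin 2) (Fin 2) ℂ} (hM : M.PosSemidef) (htr : M.trace = 1)
    (ha : (M 0 0).re = 0) :
    (M 0 1).re + (M 1 0).re = 0 ∧ (M 1 1).re = 1 := by
  have htr2 : M 0 0 + M 1 1 = 1 := by rw [← Matrix.trace_fin_two]; exact htr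
  have hd : (M 1 1).re = 1 := by
    have := congrArg Complex.re htr2
    simp [Complex.add_re] at this
    linarith
  refine ⟨?_, hd⟩
  by_contra hs
  set s := (M 0 1).re + (M 1 0).re with hsdef
  have h := aux_q hM (-2/s) 1
  rw [ha, hd] at h
  have hkey : (-2/s)*1*(M 0 1).re + (-2/s)*1*(M 1 0).re = -2 := by
    field_simp
    ring
  nlinarith [h, hkey]

/-- Example 3, 3-qubit pure entangled state: Bob's eight
unnormalized conditional states for
`|Ψ'⟩ = (1/√6)[|001⟩ + |01⟩(|0⟩+|1⟩) + |10⟩(|0⟩−|1⟩) − |110⟩]` under the `zz`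
and `xx` settings admit no LHS model (the paradox "2_Q = (1+δ)_C" with
`0 < δ < 1`). -/
theorem example3_three_qubit_pure
    (ρt : Fin 2 → Fin 4 → Matrix (Fin 2) (Fin 2) ℂ)
    (h00 : ρt 0 0 = (1 / 6 : ℝ) • !![0, 0; 0, 1])
    (h01 : ρt 0 1 = (1 / 6 : ℝ) • !![1, 1; 1, 1])
    (h02 : ρt 0 2 = (1 / 6 : ℝ) • !![1, -1; -1, 1])
    (h03 : ρt 0 3 = (1 / 6 : ℝ) • !![1, 0; 0, 0])
    (h10 : ρt 1 0 = (1 / 24 : ℝ) • !![1, 1; 1, 1])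
    (h11 : ρt 1 1 = (1 / 24 : ℝ) • !![1, -1; -1, 1])
    (h12 : ρt 1 2 = (1 / 24 : ℝ) • !![1, 3; 3, 9])
    (h13 : ρt 1 3 = (1 / 24 : ℝ) • !![9, -3; -3, 1]) :
    ¬ HasLHSModel ρt := by
  rintro ⟨m, w, ρ, p, hw, -, hρ, hp, hpsum, heq⟩
  -- per-outcome zero constraints for setting 1
  have mkz : ∀ (b : Fin 4) (α β : ℝ), (α^2 * ((ρt 1 b) 0 0).re + α*β*((ρt 1 b) 0 1).re
        + α*β*((ρt 1 b) 1 0).re + β^2 * ((ρt 1 b) 1 1).re = 0) →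
      ∀ ξ, p b 1 ξ * w ξ * (α^2 * (ρ ξ 0 0).re + α*β*(ρ ξ 0 1).re + α*β*(ρ ξ 1 0).re
        + β^2 * (ρ ξ 1 1).re) = 0 := by
    intro b α β hT ξ
    have hS := model_q (fun ξ => p b 1 ξ) w ρ (ρt 1 b) (heq 1 b) α β
    rw [hT] at hS
    exact (Finset.sum_eq_zero_iff_of_nonneg
      (fun ξ _ => mul_nonneg (mul_nonneg (hp b 1 ξ) (hw ξ)) (aux_q (hρ ξ).1 α β))).mp
      hS ξ (Finset.mem_univ ξ)
  -- target quadratic-form values vanish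
  have T0 := mkz 0 1 (-1) (by rw [h10]; norm_num [Matrix.smul_apply, Complex.real_smul])
  have T1 := mkz 1 1 1 (by rw [h11]; norm_num [Matrix.smul_apply, Complex.real_smul])
  have T2 := mkz 2 3 (-1) (by rw [h12]; norm_num [Matrix.smul_apply, Complex.real_smul])
  have T3 := mkz 3 1 3 (by rw [h13]; norm_num [Matrix.smul_apply, Complex.real_smul])
  -- key: if w ξ ≠ 0 then (ρ ξ 0 0).re ≠ 0
  have key : ∀ ξ, w ξ ≠ 0 → (ρ ξ 0 0).re ≠ 0 := by
    intro ξ hwξ ha0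
    obtain ⟨hs, hd⟩ := aux_offdiag (hρ ξ).1 (hρ ξ).2 ha0
    have hp0 : p 0 1 ξ = 0 := by
      have := T0 ξ
      rw [ha0, hd] at this
      have hq1 : (1:ℝ)^2*0 = 0 := by norm_num
      rcases mul_eq_zero.mp this with h | h
      · rcases mul_eq_zero.mp h with h' | h'
        · exact h'
        · exact absurd h' hwξ
      · nlinarith [h, hs]
    have hp1 : p 1 1 ξ = 0 := by
      have := T1 ξ
      rw [ha0, hd] at this
      rcases mul_eq_zero.mp this with h | h
      · rcases mul_eq_zero.mp h with h' | h'
        · exact h'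
        · exact absurd h' hwξ
      · nlinarith [h, hs]
    have hp2 : p 2 1 ξ = 0 := by
      have := T2 ξ
      rw [ha0, hd] at this
      rcases mul_eq_zero.mp this with h | h
      · rcases mul_eq_zero.mp h with h' | h'
        · exact h'
        · exact absurd h' hwξ
      · nlinarith [h, hs]
    have hp3 : p 3 1 ξ = 0 := by
      have := T3 ξ
      rw [ha0, hd] at this
      rcases mul_eq_zero.mp this with h | h
      · rcases mul_eq_zero.mp h with h' | h'
        · exact h'
        · exact absurd h' hwξ
      · nlinarith [h, hs]
    have hsum := hpsum 1 ξ
    rw [Fin.sum_univ_four, hp0, hp1, hp2, hp3] at hsum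
    norm_num at hsum
  -- setting 0, outcome 0
  have H0 := heq 0 0
  rw [h00] at H0
  have E00 := entry_re (fun ξ => p 0 0 ξ) w ρ _ H0 0 0
  have E11 := entry_re (fun ξ => p 0 0 ξ) w ρ _ H0 1 1
  have hE00 : ∑ ξ, p 0 0 ξ * w ξ * (ρ ξ 0 0).re = 0 := by
    rw [E00]; simp [Matrix.smul_apply]
  have hE11 : ∑ ξ, p 0 0 ξ * w ξ * (ρ ξ 1 1).re = 1/6 := by
    rw [E11]; norm_num [Matrix.smul_apply, Complex.real_smul]
  have ha_nn : ∀ ξ, 0 ≤ (ρ ξ 0 0).re := by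
    intro ξ
    have := aux_q (hρ ξ).1 1 0
    simpa using this
  have hz : ∀ ξ, p 0 0 ξ * w ξ * (ρ ξ 0 0).re = 0 := fun ξ =>
    (Finset.sum_eq_zero_iff_of_nonneg
      (fun ξ _ => mul_nonneg (mul_nonneg (hp 0 0 ξ) (hw ξ)) (ha_nn ξ))).mp
      hE00 ξ (Finset.mem_univ ξ)
  have hzz : ∀ ξ, p 0 0 ξ * w ξ = 0 := by
    intro ξ
    rcases eq_or_ne (w ξ) 0 with h | h
    · rw [h, mul_zero]
    · exact (mul_eq_zero.mp (hz ξ)).resolve_right (key ξ h)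
  have : ∑ ξ, p 0 0 ξ * w ξ * (ρ ξ 1 1).re = 0 :=
    Finset.sum_eq_zero fun ξ _ => by rw [hzz ξ, zero_mul]
  rw [this] at hE11
  norm_num at hE11
end
end

section
/- (Example 4: the W state.) The 2-setting, 4-outcome family ρ̃ : Fin 2 → Fin 4 → Matrix 2 2 ℂ given by: setting 0: ρ̃ 0 0 = (1/3) • !![0,0;0,1], ρ̃ 0 1 = (1/3) • !![1,0;0,0], ρ̃ 0 2 = (1/3) • !![1,0;0,0], ρ̃ 0 3 = 0; setting 1: ρ̃ 1 0 = (1/12) • !![4,2;2,1], ρ̃ 1 1 = (1/12) • !![0,0;0,1], ρ̃ 1 2 = (1/12) • !![0,0;0,1], ρ̃ 1 3 = (1/12) • !![4,−2;−2,1]; admits no LHS model (the EPR steering paradox '2_Q = (1+δ)_C' with 0 < δ < 1 for the W state). -/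
open Matrix BigOperators
open scoped ComplexOrder

noncomputable section

def qf (u : Fin 2 → ℂ) (M : Matrix (Fin 2) (Fin 2) ℂ) : ℝ :=
  (star u ⬝ᵥ M.mulVec u).re

lemma qf_nonneg {M : Matrix (Fin 2) (Fin 2) ℂ} (hM : M.PosSemidef) (u : Fin 2 → ℂ) :
    0 ≤ qf u M := by
  have := hM.dotProduct_mulVec_nonneg u
  rw [Complex.le_def] at this
  simpa [qf] using this.1

lemma dot_sum {m : ℕ} (u : Fin 2 → ℂ) (c : Fin m → ℝ)
    (ρ : Fin m → Matrix (Fin 2) (Fin 2) ℂ) (s : Finset (Fin m)) :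
    star u ⬝ᵥ (∑ ξ ∈ s, c ξ • ρ ξ).mulVec u
      = ∑ ξ ∈ s, (c ξ : ℂ) * (star u ⬝ᵥ (ρ ξ).mulVec u) := by
  induction s using Finset.induction with
  | empty => simp [Matrix.zero_mulVec]
  | insert _ _ h ih =>
    rw [Finset.sum_insert h, Finset.sum_insert h, Matrix.add_mulVec, dotProduct_add, ih]
    congr 1
    rw [Matrix.smul_mulVec, dotProduct_smul]
    simp only [dotProduct, Fin.sum_univ_two, smul_eq_mul, Complex.real_smul]

lemma qf_sum {m : ℕ} (u : Fin 2 → ℂ) (c : Fin m → ℝ)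
    (ρ : Fin m → Matrix (Fin 2) (Fin 2) ℂ) :
    qf u (∑ ξ, c ξ • ρ ξ) = ∑ ξ, c ξ * qf u (ρ ξ) := by
  rw [qf, dot_sum, Complex.re_sum]
  refine Finset.sum_congr rfl fun ξ _ => ?_
  rw [qf, ← Complex.ofReal_re (c ξ)]
  simp [Complex.mul_re]

lemma qf_expand (u : Fin 2 → ℂ) (M : Matrix (Fin 2) (Fin 2) ℂ) :
    qf u M = ((starRingEnd ℂ) (u 0) * (M 0 0 * u 0 + M 0 1 * u 1)
      + (starRingEnd ℂ) (u 1) * (M 1 0 * u 0 + M 1 1 * u 1)).re := by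
  simp [qf, dotProduct, Matrix.mulVec, Fin.sum_univ_two, mul_comm]

/-- Example 4, the W state: Bob's eight unnormalized
conditional states for the W state `|W⟩ = (|100⟩+|010⟩+|001⟩)/√3` under the
`zz` and `xx` settings admit no LHS model (the paradox "2_Q = (1+δ)_C" with
`0 < δ < 1`). -/
theorem example4_w_state
    (ρt : Fin 2 → Fin 4 → Matrix (Fin 2) (Fin 2) ℂ)
    (h00 : ρt 0 0 = (1 / 3 : ℝ) • !![0, 0; 0, 1])
    (h01 : ρt 0 1 = (1 / 3 : ℝ) • !![1, 0; 0, 0])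
    (h02 : ρt 0 2 = (1 / 3 : ℝ) • !![1, 0; 0, 0])
    (h03 : ρt 0 3 = 0)
    (h10 : ρt 1 0 = (1 / 12 : ℝ) • !![4, 2; 2, 1])
    (h11 : ρt 1 1 = (1 / 12 : ℝ) • !![0, 0; 0, 1])
    (h12 : ρt 1 2 = (1 / 12 : ℝ) • !![0, 0; 0, 1])
    (h13 : ρt 1 3 = (1 / 12 : ℝ) • !![4, -2; -2, 1]) :
    ¬ HasLHSModel ρt := by
  rintro ⟨m, w, ρ, p, hw0, hwsum, hρ, hp0, hpsum, heq⟩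
  -- notation
  set e0 : Fin 2 → ℂ := ![1, 0] with he0
  set e1 : Fin 2 → ℂ := ![0, 1] with he1
  set v : Fin 2 → ℂ := ![1, -2] with hv
  -- rewrite model equations via qf
  have key : ∀ (ℓ : Fin 2) (a : Fin 4) (u : Fin 2 → ℂ),
      qf u (ρt ℓ a) = ∑ ξ, (p a ℓ ξ * w ξ) * qf u (ρ ξ) := by
    intro ℓ a u
    rw [heq ℓ a]
    have : (∑ ξ, p a ℓ ξ • w ξ • ρ ξ) = ∑ ξ, (p a ℓ ξ * w ξ) • ρ ξ := by
      refine Finset.sum_congr rfl fun ξ _ => ?_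
      rw [smul_smul]
    rw [this, qf_sum]
  -- nonnegativity of all terms
  have hterm : ∀ (ℓ : Fin 2) (a : Fin 4) (u : Fin 2 → ℂ) (ξ : Fin m),
      0 ≤ (p a ℓ ξ * w ξ) * qf u (ρ ξ) := fun ℓ a u ξ =>
    mul_nonneg (mul_nonneg (hp0 a ℓ ξ) (hw0 ξ)) (qf_nonneg (hρ ξ).1 u)
  -- terms of a zero sum vanish
  have hzero : ∀ (ℓ : Fin 2) (a : Fin 4) (u : Fin 2 → ℂ), qf u (ρt ℓ a) = 0 →
      ∀ ξ, (p a ℓ ξ * w ξ) * qf u (ρ ξ) = 0 := by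
    intro ℓ a u h ξ
    have hs : ∑ ξ, (p a ℓ ξ * w ξ) * qf u (ρ ξ) = 0 := by rw [← key]; exact h
    exact (Finset.sum_eq_zero_iff_of_nonneg (fun ξ _ => hterm ℓ a u ξ)).mp hs ξ
      (Finset.mem_univ ξ)
  -- the values of qf on the given matrices
  have q000 : qf e0 (ρt 0 0) = 0 := by
    rw [h00, qf_expand]; norm_num [he0, Matrix.smul_apply]
  have q011 : qf e1 (ρt 0 1) = 0 := by
    rw [h01, qf_expand]; norm_num [he1, Matrix.smul_apply]
  have q012 : qf e1 (ρt 0 2) = 0 := by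
    rw [h02, qf_expand]; norm_num [he1, Matrix.smul_apply]
  have q030 : qf e0 (ρt 0 3) = 0 := by
    rw [h03, qf_expand]; norm_num
  have q031 : qf e1 (ρt 0 3) = 0 := by
    rw [h03, qf_expand]; norm_num
  have q10v : qf v (ρt 1 0) = 0 := by
    rw [h10, qf_expand]; norm_num [hv, Matrix.smul_apply]
  have q10e0 : qf e0 (ρt 1 0) = 1 / 3 := by
    rw [h10, qf_expand]; norm_num [he0, Matrix.smul_apply]
  -- main claim: every term of the (e0, setting 1, outcome 0) sum vanishes
  have main : ∀ ξ, (p 0 1 ξ * w ξ) * qf e0 (ρ ξ) = 0 := by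
    intro ξ
    by_contra hne
    have hpos : 0 < (p 0 1 ξ * w ξ) * qf e0 (ρ ξ) :=
      lt_of_le_of_ne (hterm 1 0 e0 ξ) (Ne.symm hne)
    have hwpos : 0 < w ξ := by
      rcases (hw0 ξ).lt_or_eq with h | h
      · exact h
      · exfalso; apply hne; rw [← h]; ring
    have hppos : 0 < p 0 1 ξ := by
      rcases (hp0 0 1 ξ).lt_or_eq with h | h
      · exact h
      · exfalso; apply hne; rw [← h]; ring
    have hapos : 0 < qf e0 (ρ ξ) := by
      rcases (qf_nonneg (hρ ξ).1 e0).lt_or_eq with h | h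
      · exact h
      · exfalso; apply hne; rw [← h]; ring
    -- setting 0 analysis
    have hp00 : p 0 0 ξ = 0 := by
      have := hzero 0 0 e0 q000 ξ
      rcases mul_eq_zero.mp this with h | h
      · rcases mul_eq_zero.mp h with h' | h'
        · exact h'
        · exact absurd h' (ne_of_gt hwpos)
      · exact absurd h (ne_of_gt hapos)
    have hp30 : p 3 0 ξ = 0 := by
      have h1 := hzero 0 3 e0 q030 ξ
      have h2 := hzero 0 3 e1 q031 ξ
      -- qf e0 + qf e1 = trace = 1
      have htr : qf e0 (ρ ξ) + qf e1 (ρ ξ) = 1 := by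
        have := (hρ ξ).2
        rw [Matrix.trace_fin_two] at this
        have := congrArg Complex.re this
        rw [qf_expand, qf_expand]
        simp only [he0, he1] at *
        simpa [Complex.add_re] using this
      by_contra hp3
      have hp3' : 0 < p 3 0 ξ := lt_of_le_of_ne (hp0 3 0 ξ) (Ne.symm hp3)
      have hpw : 0 < p 3 0 ξ * w ξ := mul_pos hp3' hwpos
      have hqa : qf e0 (ρ ξ) = 0 := by
        rcases mul_eq_zero.mp h1 with h | h
        · exact absurd h (ne_of_gt hpw)
        · exact h
      exact absurd hqa (ne_of_gt hapos)
    have hd0 : qf e1 (ρ ξ) = 0 := by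
      have hsum := hpsum 0 ξ
      rw [Fin.sum_univ_four] at hsum
      rw [hp00, hp30] at hsum
      -- p 1 0 ξ + p 2 0 ξ = 1, so one is positive
      have : 0 < p 1 0 ξ ∨ 0 < p 2 0 ξ := by
        by_contra hc
        push_neg at hc
        have h1 : p 1 0 ξ = 0 := le_antisymm hc.1 (hp0 1 0 ξ)
        have h2 : p 2 0 ξ = 0 := le_antisymm hc.2 (hp0 2 0 ξ)
        rw [h1, h2] at hsum; norm_num at hsum
      rcases this with h | h
      · have := hzero 0 1 e1 q011 ξ
        rcases mul_eq_zero.mp this with h' | h'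
        · exact absurd h' (ne_of_gt (mul_pos h hwpos))
        · exact h'
      · have := hzero 0 2 e1 q012 ξ
        rcases mul_eq_zero.mp this with h' | h'
        · exact absurd h' (ne_of_gt (mul_pos h hwpos))
        · exact h'
    have ha1 : qf e0 (ρ ξ) = 1 := by
      have htr : qf e0 (ρ ξ) + qf e1 (ρ ξ) = 1 := by
        have := (hρ ξ).2
        rw [Matrix.trace_fin_two] at this
        have := congrArg Complex.re this
        rw [qf_expand, qf_expand]
        simp only [he0, he1] at *
        simpa [Complex.add_re] using this
      linarith [htr, hd0]
    -- entries: let M := ρ ξ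
    set M := ρ ξ with hM
    have hMa : (M 0 0).re = 1 := by
      have := ha1; rw [qf_expand] at this
      simpa [he0] using this
    have hMd : (M 1 1).re = 0 := by
      have := hd0; rw [qf_expand] at this
      simpa [he1] using this
    have hherm : (M 1 0).re = (M 0 1).re := by
      have := (hρ ξ).1.1.apply 0 1
      have := congrArg Complex.re this
      simpa [Complex.star_def] using this
    -- λ-trick to show re (M 0 1) = 0
    set cM : ℝ := (M 0 1).re with hcM
    have hcM0 : cM = 0 := by
      have hnn := qf_nonneg (hρ ξ).1 ![(-cM : ℂ), 1]
      rw [qf_expand] at hnn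
      have hval : ((starRingEnd ℂ) ((-cM : ℂ)) * (M 0 0 * (-cM : ℂ) + M 0 1 * 1)
          + (starRingEnd ℂ) (1 : ℂ) * (M 1 0 * (-cM : ℂ) + M 1 1 * 1)).re
          = cM ^ 2 * (M 0 0).re - cM * (M 0 1).re - cM * (M 1 0).re + (M 1 1).re := by
        simp [Complex.mul_re, Complex.add_re, Complex.conj_re, Complex.conj_im,
          Complex.ofReal_re, Complex.ofReal_im, Complex.neg_re, Complex.neg_im]
        ring
      simp only [Matrix.cons_val_zero, Matrix.cons_val_one, Matrix.head_cons] at hnn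
      rw [hval] at hnn
      rw [hMa, hMd, hherm, ← hcM] at hnn
      nlinarith
    -- qf v = 1
    have hqv : qf v M = 1 := by
      rw [qf_expand]
      have hval : ((starRingEnd ℂ) (v 0) * (M 0 0 * v 0 + M 0 1 * v 1)
          + (starRingEnd ℂ) (v 1) * (M 1 0 * v 0 + M 1 1 * v 1)).re
          = (M 0 0).re - 2 * (M 0 1).re - 2 * (M 1 0).re + 4 * (M 1 1).re := by
        simp [hv, Complex.mul_re, Complex.add_re, Complex.conj_re, Complex.conj_im]
        ring
      rw [hval, hMa, hMd, hherm, ← hcM, hcM0]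
      ring
    -- contradiction with setting 1 outcome 0
    have := hzero 1 0 v q10v ξ
    rw [hqv] at this
    rcases mul_eq_zero.mp this with h | h
    · exact absurd h (ne_of_gt (mul_pos hppos hwpos))
    · norm_num at h
  -- conclude
  have := key 1 0 e0
  rw [q10e0] at this
  rw [Finset.sum_eq_zero (fun ξ _ => main ξ)] at this
  norm_num at this
end
end
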